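/- arXiv:1804.06500 — 2 statements merged into one kernel-verified Lean document; each statement's English description precedes it below -/
import Mathlib

section
/- (Stochastic mirror descent.) Let Θ ⊆ ℝ^n be compact convex, f₁,…,f_T : Θ → ℝ convex, ‖·‖ a norm with dual norm ‖·‖_*, and Ψ : Θ → ℝ₊ nonnegative, differentiable and 1-strongly convex w.r.t. ‖·‖ with B_Ψ ≥ max_{θ∈Θ} Ψ(θ). Starting from θ^(1) = argmin_{θ∈Θ} Ψ(θ), perform T stochastic mirror-descent iterations: ∇Ψ(θ̃^(t+1)) = ∇Ψ(θ^(t)) − η ǧ^(t) and θ^(t+1) = argmin_{θ∈Θ} B_Ψ(θ | θ̃^(t+1)), where ǧ^(t) is an adapted random vector with E[ǧ^(t) | θ^(t), past] ∈ ∂f_t(θ^(t)), ‖ǧ^(t)‖_* ≤ B_ǧ almost surely, and η := √(B_Ψ/(T B_ǧ²)). Then for every θ* ∈ Θ, with probability at least 1−δ over the draws of the stochastic subgradients: (1/T) Σ_{t=1}^T f_t(θ^(t)) − (1/T) Σ_{t=1}^T f_t(θ*) ≤ 2 B_ǧ √(2 B_Ψ (1 + 16 ln(1/δ)) / T). -/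
open MeasureTheory

/-- The dual norm of a (semi)norm `N` on `Fin n → ℝ`:
`‖v‖_* = sup {⟨v, x⟩ : N x ≤ 1}`. -/
noncomputable def dualNorm {n : ℕ} (N : (Fin n → ℝ) → ℝ) (v : Fin n → ℝ) : ℝ :=
  sSup ((fun x => ∑ i, v i * x i) '' {x | N x ≤ 1})

/-- The Bregman divergence associated with `Ψ` (whose gradient is `gradΨ`). -/
noncomputable def bregman {n : ℕ} (Ψ : (Fin n → ℝ) → ℝ)
    (gradΨ : (Fin n → ℝ) → (Fin n → ℝ)) (a b : Fin n → ℝ) : ℝ :=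
  Ψ a - Ψ b - ∑ i, gradΨ b i * (a i - b i)

section NormFacts
variable {n : ℕ} {N : (Fin n → ℝ) → ℝ}
  (hNtri : ∀ x y, N (x + y) ≤ N x + N y)
  (hNsmul : ∀ (c : ℝ) x, N (c • x) = |c| * N x)

include hNsmul in
lemma N_zero : N 0 = 0 := by
  have := hNsmul 0 0; simpa using this

include hNsmul in
lemma N_neg (x) : N (-x) = N x := by
  have := hNsmul (-1) x; simpa using this

include hNtri hNsmul in
lemma N_nonneg (x) : 0 ≤ N x := by
  have h := hNtri x (-x)
  rw [add_neg_cancel, N_zero hNsmul, N_neg hNsmul] at h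
  linarith

include hNtri hNsmul in
lemma N_sub_rev (x y) : N (x - y) = N (y - x) := by
  rw [← N_neg hNsmul (y - x), neg_sub]

include hNtri hNsmul in
lemma N_le_sum (x : Fin n → ℝ) : N x ≤ ∑ i, |x i| * N (Pi.single i 1) := by
  have hx : x = ∑ i, x i • (Pi.single i (1:ℝ) : Fin n → ℝ) := by
    funext j
    simp [Finset.sum_apply, Pi.single_apply]
  calc N x = N (∑ i, x i • (Pi.single i (1:ℝ) : Fin n → ℝ)) := by rw [← hx]
    _ ≤ ∑ i, N (x i • (Pi.single i (1:ℝ) : Fin n → ℝ)) :=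
        Finset.le_sum_of_subadditive N (N_zero hNsmul).le hNtri _ _
    _ = ∑ i, |x i| * N (Pi.single i 1) := by simp [hNsmul]

include hNtri hNsmul in
lemma N_le_const : ∃ C : ℝ, 0 < C ∧ ∀ x, N x ≤ C * ‖x‖ := by
  refine ⟨(∑ i, N (Pi.single i (1:ℝ))) + 1, ?_, ?_⟩
  · have : 0 ≤ ∑ i, N (Pi.single i (1:ℝ)) :=
      Finset.sum_nonneg fun i _ => N_nonneg hNtri hNsmul _
    linarith
  · intro x
    calc N x ≤ ∑ i, |x i| * N (Pi.single i 1) := N_le_sum hNtri hNsmul x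
      _ ≤ ∑ i, ‖x‖ * N (Pi.single i 1) := by
          refine Finset.sum_le_sum fun i _ => ?_
          exact mul_le_mul_of_nonneg_right (by simpa using norm_le_pi_norm x i)
            (N_nonneg hNtri hNsmul _)
      _ = (∑ i, N (Pi.single i (1:ℝ))) * ‖x‖ := by
          rw [Finset.sum_mul]; exact Finset.sum_congr rfl fun i _ => mul_comm _ _
      _ ≤ ((∑ i, N (Pi.single i (1:ℝ))) + 1) * ‖x‖ := by
          have := norm_nonneg x; nlinarith

include hNtri hNsmul in
lemma N_continuous : Continuous N := by
  obtain ⟨C, hC, hCb⟩ := N_le_const hNtri hNsmul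
  have : LipschitzWith C.toNNReal N := by
    refine LipschitzWith.of_dist_le_mul fun x y => ?_
    rw [Real.dist_eq, dist_eq_norm]
    have h1 : N x - N y ≤ N (x - y) := by
      have := hNtri y (x - y); simp at this; linarith
    have h2 : N y - N x ≤ N (x - y) := by
      have := hNtri x (y - x); simp at this
      have := N_sub_rev hNtri hNsmul x y; linarith
    have := hCb (x - y)
    rw [abs_sub_le_iff]
    constructor <;> [skip; skip] <;>
      simp only [Real.coe_toNNReal _ hC.le] <;> linarith
  exact this.continuous

include hNtri hNsmul in
lemma const_le_N (hNdef : ∀ x, N x = 0 → x = 0) :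
    ∃ c : ℝ, 0 < c ∧ ∀ x, c * ‖x‖ ≤ N x := by
  rcases Nat.eq_zero_or_pos n with hn | hn
  · refine ⟨1, one_pos, fun x => ?_⟩
    subst hn
    have hx : x = 0 := funext fun i => absurd i.2 (by omega)
    rw [hx, N_zero hNsmul, norm_zero, one_mul]
  · have hne : ((Metric.sphere (0 : Fin n → ℝ) 1)).Nonempty := by
      refine ⟨Pi.single ⟨0, hn⟩ (1:ℝ), ?_⟩
      simp only [Metric.mem_sphere, dist_zero_right]
      rw [Pi.norm_single]
      norm_num
    obtain ⟨x₀, hx₀mem, hx₀min⟩ :=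
      (isCompact_sphere (0 : Fin n → ℝ) 1).exists_isMinOn hne
        ((N_continuous hNtri hNsmul).continuousOn)
    have hx₀norm : ‖x₀‖ = 1 := by simpa using hx₀mem
    have hx₀ne : x₀ ≠ 0 := by intro h; rw [h] at hx₀norm; simp at hx₀norm
    have hm : 0 < N x₀ := by
      rcases (N_nonneg hNtri hNsmul x₀).lt_or_eq with h | h
      · exact h
      · exact absurd (hNdef x₀ h.symm) hx₀ne
    refine ⟨N x₀, hm, fun x => ?_⟩
    rcases eq_or_ne x 0 with rfl | hx
    · simp [N_zero hNsmul]
    · have hxn : (0:ℝ) < ‖x‖ := norm_pos_iff.mpr hx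
      have hu : (‖x‖⁻¹ • x) ∈ Metric.sphere (0 : Fin n → ℝ) 1 := by
        simp [norm_smul, abs_of_pos (inv_pos.mpr hxn), inv_mul_cancel₀ hxn.ne']
      have hle := hx₀min hu
      simp only [Set.mem_setOf_eq] at hle
      have hNu : N (‖x‖⁻¹ • x) = ‖x‖⁻¹ * N x := by
        rw [hNsmul]; congr 1; exact abs_of_pos (inv_pos.mpr hxn)
      rw [hNu] at hle
      calc N x₀ * ‖x‖ ≤ (‖x‖⁻¹ * N x) * ‖x‖ := by nlinarith [hle]
        _ = N x := by field_simp

end NormFacts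

section DualFacts
variable {n : ℕ} {N : (Fin n → ℝ) → ℝ}
  (hNtri : ∀ x y, N (x + y) ≤ N x + N y)
  (hNsmul : ∀ (c : ℝ) x, N (c • x) = |c| * N x)
  (hNdef : ∀ x, N x = 0 → x = 0)

include hNtri hNsmul hNdef in
lemma dual_bddAbove (v : Fin n → ℝ) :
    BddAbove ((fun x => ∑ i, v i * x i) '' {x | N x ≤ 1}) := by
  obtain ⟨c, hc, hcb⟩ := const_le_N hNtri hNsmul hNdef
  refine ⟨(∑ i, |v i|) * (1 / c), ?_⟩
  rintro y ⟨x, hx, rfl⟩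
  simp only [Set.mem_setOf_eq] at hx
  have hxn : ‖x‖ ≤ 1 / c := by
    have := hcb x
    rw [le_div_iff₀ hc]; nlinarith
  calc ∑ i, v i * x i ≤ ∑ i, |v i| * (1 / c) := by
        refine Finset.sum_le_sum fun i _ => ?_
        calc v i * x i ≤ |v i * x i| := le_abs_self _
          _ = |v i| * |x i| := abs_mul _ _
          _ ≤ |v i| * (1 / c) :=
            mul_le_mul_of_nonneg_left
              ((by simpa using norm_le_pi_norm x i : |x i| ≤ ‖x‖).trans hxn)
              (abs_nonneg _)
    _ = (∑ i, |v i|) * (1 / c) := (Finset.sum_mul _ _ _).symm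

include hNtri hNsmul hNdef in
lemma le_dualNorm (v x : Fin n → ℝ) (hx : N x ≤ 1) :
    ∑ i, v i * x i ≤ dualNorm N v :=
  le_csSup (dual_bddAbove hNtri hNsmul hNdef v) ⟨x, hx, rfl⟩

include hNtri hNsmul hNdef in
lemma dualNorm_nonneg (v : Fin n → ℝ) : 0 ≤ dualNorm N v := by
  have := le_dualNorm hNtri hNsmul hNdef v 0 (by rw [N_zero hNsmul]; norm_num)
  simpa using this

include hNtri hNsmul hNdef in
lemma pairing_le_dualNorm_mul (v x : Fin n → ℝ) :
    ∑ i, v i * x i ≤ dualNorm N v * N x := by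
  rcases (N_nonneg hNtri hNsmul x).lt_or_eq with h | h
  · have hu : N ((N x)⁻¹ • x) ≤ 1 := by
      rw [hNsmul, abs_of_pos (inv_pos.mpr h), inv_mul_cancel₀ h.ne']
    have := le_dualNorm hNtri hNsmul hNdef v _ hu
    have hsum : ∑ i, v i * ((N x)⁻¹ • x) i = (N x)⁻¹ * ∑ i, v i * x i := by
      rw [Finset.mul_sum]; exact Finset.sum_congr rfl fun i _ => by
        simp [Pi.smul_apply]; ring
    rw [hsum] at this
    calc ∑ i, v i * x i = ((N x)⁻¹ * ∑ i, v i * x i) * N x := by field_simp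
      _ ≤ dualNorm N v * N x := mul_le_mul_of_nonneg_right this h.le
  · rw [hNdef x h.symm, N_zero hNsmul, mul_zero]
    simp

include hNtri hNsmul hNdef in
lemma abs_pairing_le_dualNorm_mul (v x : Fin n → ℝ) :
    |∑ i, v i * x i| ≤ dualNorm N v * N x := by
  rw [abs_le]
  constructor
  · have := pairing_le_dualNorm_mul hNtri hNsmul hNdef v (-x)
    rw [N_neg hNsmul] at this
    rw [show ∑ i, v i * (-x) i = -∑ i, v i * x i by
      rw [← Finset.sum_neg_distrib]; exact Finset.sum_congr rfl fun i _ => by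
        simp] at this
    linarith
  · exact pairing_le_dualNorm_mul hNtri hNsmul hNdef v x

end DualFacts

section Opt

lemma sum_proj_apply {n : ℕ} (c : Fin n → ℝ) (d : Fin n → ℝ) :
    (∑ i, c i • (ContinuousLinearMap.proj i : (Fin n → ℝ) →L[ℝ] ℝ)) d
      = ∑ i, c i * d i := by
  rw [ContinuousLinearMap.sum_apply]
  exact Finset.sum_congr rfl fun i _ => by
    simp [ContinuousLinearMap.smul_apply, ContinuousLinearMap.proj_apply,
      smul_eq_mul]

lemma first_order_opt {n : ℕ} {Θ : Set (Fin n → ℝ)} (hΘconv : Convex ℝ Θ)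
    {F : (Fin n → ℝ) → ℝ} {L : (Fin n → ℝ) →L[ℝ] ℝ} {p : Fin n → ℝ}
    (hd : HasFDerivAt F L p) (hp : p ∈ Θ) (hmin : ∀ y ∈ Θ, F p ≤ F y)
    {q : Fin n → ℝ} (hq : q ∈ Θ) : 0 ≤ L (q - p) := by
  by_contra hneg
  push_neg at hneg
  set v : Fin n → ℝ := q - p with hv
  have hφ : ∀ s : ℝ, HasDerivAt (fun s : ℝ => p + s • v) v s := by
    intro s
    simpa using ((hasDerivAt_id s).smul_const v).const_add p
  have hg : HasDerivAt (fun s : ℝ => F (p + s • v)) (L v) 0 := by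
    have h0 : HasFDerivAt F L (p + (0:ℝ) • v) := by simpa using hd
    exact h0.comp_hasDerivAt 0 (hφ 0)
  have hslope := hg.tendsto_slope_zero_right
  have hev : ∀ᶠ s in nhdsWithin (0:ℝ) (Set.Ioi 0),
      s⁻¹ • ((fun s : ℝ => F (p + s • v)) (0 + s) - (fun s : ℝ => F (p + s • v)) 0) < 0 :=
    hslope.eventually_lt_const hneg
  have hmem : Set.Ioo (0:ℝ) 1 ∈ nhdsWithin (0:ℝ) (Set.Ioi 0) :=
    Ioo_mem_nhdsGT_of_mem (by norm_num : (0:ℝ) ∈ Set.Ico (0:ℝ) 1)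
  obtain ⟨s, hs, hslt⟩ := (hev.and (Filter.eventually_of_mem hmem fun x hx => hx)).exists
  obtain ⟨hs0, hs1⟩ := hslt
  simp only [zero_add, zero_smul, add_zero, smul_eq_mul] at hs
  have hmemΘ : p + s • v ∈ Θ := by
    have := hΘconv hp hq (by linarith : (0:ℝ) ≤ 1 - s) (le_of_lt hs0) (by ring)
    convert this using 1
    funext i
    simp [hv]
    ring
  have hge : F p ≤ F (p + s • v) := hmin _ hmemΘ
  have : s⁻¹ * (F (p + s • v) - F p) ≥ 0 :=
    mul_nonneg (inv_nonneg.mpr hs0.le) (by linarith)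
  linarith

end Opt

lemma grad_opt {n : ℕ} {Θ : Set (Fin n → ℝ)} (hΘconv : Convex ℝ Θ)
    {Ψ : (Fin n → ℝ) → ℝ} {gradΨ : (Fin n → ℝ) → (Fin n → ℝ)}
    (hΨdiff : ∀ x, HasFDerivAt Ψ
      (∑ i, gradΨ x i • (ContinuousLinearMap.proj i : (Fin n → ℝ) →L[ℝ] ℝ)) x)
    (w : Fin n → ℝ) {p : Fin n → ℝ} (hp : p ∈ Θ)
    (hmin : ∀ y ∈ Θ, Ψ p - ∑ i, w i * p i ≤ Ψ y - ∑ i, w i * y i)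
    {q : Fin n → ℝ} (hq : q ∈ Θ) :
    0 ≤ ∑ i, (gradΨ p i - w i) * (q i - p i) := by
  set Lw : (Fin n → ℝ) →L[ℝ] ℝ :=
    ∑ i, w i • (ContinuousLinearMap.proj i : (Fin n → ℝ) →L[ℝ] ℝ) with hLw
  have hwfun : (fun y : Fin n → ℝ => ∑ i, w i * y i) = fun y => Lw y := by
    funext y; rw [hLw, sum_proj_apply]
  have hF : HasFDerivAt (fun y => Ψ y - ∑ i, w i * y i)
      ((∑ i, gradΨ p i • (ContinuousLinearMap.proj i : (Fin n → ℝ) →L[ℝ] ℝ)) - Lw) p := by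
    have h1 := (hΨdiff p).sub Lw.hasFDerivAt
    have heq : (fun y => Ψ y - ∑ i, w i * y i) = (fun x => Ψ x - Lw x) := by
      funext y; rw [hLw, sum_proj_apply]
    rw [heq]
    exact h1
  have h := first_order_opt hΘconv hF hp hmin hq
  rw [ContinuousLinearMap.sub_apply, sum_proj_apply, sum_proj_apply] at h
  calc (0:ℝ) ≤ (∑ i, gradΨ p i * (q - p) i) - ∑ i, w i * (q - p) i := h
    _ = ∑ i, (gradΨ p i - w i) * (q i - p i) := by
        rw [← Finset.sum_sub_distrib]
        exact Finset.sum_congr rfl fun i _ => by simp [Pi.sub_apply]; ring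

section Regret

def smdIP {n : ℕ} (v w : Fin n → ℝ) : ℝ := ∑ i, v i * w i

lemma smdIP_pair {n : ℕ} (v x y : Fin n → ℝ) :
    ∑ i, v i * (x i - y i) = smdIP v x - smdIP v y := by
  simp only [smdIP, ← Finset.sum_sub_distrib]
  exact Finset.sum_congr rfl fun i _ => by ring

lemma smdIP_sub_left {n : ℕ} (v w x : Fin n → ℝ) :
    smdIP (v - w) x = smdIP v x - smdIP w x := by
  simp only [smdIP, ← Finset.sum_sub_distrib]
  exact Finset.sum_congr rfl fun i _ => by simp [Pi.sub_apply]; ring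

lemma smdIP_smul_left {n : ℕ} (c : ℝ) (v x : Fin n → ℝ) :
    smdIP (c • v) x = c * smdIP v x := by
  simp only [smdIP, Finset.mul_sum]
  exact Finset.sum_congr rfl fun i _ => by simp [Pi.smul_apply]; ring

lemma smdIP_le {n : ℕ} {N : (Fin n → ℝ) → ℝ}
    (hNtri : ∀ x y, N (x + y) ≤ N x + N y)
    (hNsmul : ∀ (c : ℝ) x, N (c • x) = |c| * N x)
    (hNdef : ∀ x, N x = 0 → x = 0)
    (v x y : Fin n → ℝ) :
    smdIP v x - smdIP v y ≤ dualNorm N v * N (x - y) := by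
  rw [← smdIP_pair]
  have := pairing_le_dualNorm_mul hNtri hNsmul hNdef v (x - y)
  simpa [Pi.sub_apply] using this

lemma bregman_eq {n : ℕ} (Ψ : (Fin n → ℝ) → ℝ)
    (gradΨ : (Fin n → ℝ) → (Fin n → ℝ)) (a b : Fin n → ℝ) :
    bregman Ψ gradΨ a b = Ψ a - Ψ b - (smdIP (gradΨ b) a - smdIP (gradΨ b) b) := by
  rw [bregman, smdIP_pair]

lemma strong_ip {n : ℕ} {N : (Fin n → ℝ) → ℝ}
    {Ψ : (Fin n → ℝ) → ℝ} {gradΨ : (Fin n → ℝ) → (Fin n → ℝ)}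
    (hstrong : ∀ x y,
      Ψ x + (∑ i, gradΨ x i * (y i - x i)) + (1 / 2) * (N (y - x)) ^ 2 ≤ Ψ y)
    (x y : Fin n → ℝ) :
    Ψ x + (smdIP (gradΨ x) y - smdIP (gradΨ x) x) + (1/2) * (N (y - x))^2 ≤ Ψ y := by
  have := hstrong x y
  rwa [smdIP_pair] at this

/-- Per-step mirror descent inequality. -/
lemma smd_step {n : ℕ} {Θ : Set (Fin n → ℝ)} (hΘconv : Convex ℝ Θ)
    {N : (Fin n → ℝ) → ℝ}
    (hNtri : ∀ x y, N (x + y) ≤ N x + N y)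
    (hNsmul : ∀ (c : ℝ) x, N (c • x) = |c| * N x)
    (hNdef : ∀ x, N x = 0 → x = 0)
    {Ψ : (Fin n → ℝ) → ℝ} {gradΨ : (Fin n → ℝ) → (Fin n → ℝ)}
    (hΨdiff : ∀ x, HasFDerivAt Ψ
      (∑ i, gradΨ x i • (ContinuousLinearMap.proj i : (Fin n → ℝ) →L[ℝ] ℝ)) x)
    (hstrong : ∀ x y,
      Ψ x + (∑ i, gradΨ x i * (y i - x i)) + (1 / 2) * (N (y - x)) ^ 2 ≤ Ψ y)
    {Bg η : ℝ} (hη : 0 < η) (hBg : 0 ≤ Bg)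
    {x x' z gv θ' : Fin n → ℝ}
    (hxΘ : x ∈ Θ) (hθ'Θ : θ' ∈ Θ)
    (hgb : dualNorm N gv ≤ Bg)
    (hmir : gradΨ z = gradΨ x - η • gv)
    (hprj : x' ∈ Θ ∧ ∀ y ∈ Θ, bregman Ψ gradΨ x' z ≤ bregman Ψ gradΨ y z) :
    η * (smdIP gv x - smdIP gv θ')
      ≤ bregman Ψ gradΨ θ' x - bregman Ψ gradΨ θ' x' + η^2 * Bg^2 / 2 := by
  obtain ⟨hx'Θ, hmin⟩ := hprj
  -- Pythagoras via first-order optimality of the Bregman projection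
  have hopt : 0 ≤ ∑ i, (gradΨ x' i - gradΨ z i) * (θ' i - x' i) := by
    refine grad_opt hΘconv hΨdiff (gradΨ z) hx'Θ ?_ hθ'Θ
    intro y hy
    have := hmin y hy
    rw [bregman_eq, bregman_eq] at this
    simp only [smdIP] at this ⊢
    linarith
  have hopt' : 0 ≤ (smdIP (gradΨ x') θ' - smdIP (gradΨ z) θ')
      - (smdIP (gradΨ x') x' - smdIP (gradΨ z) x') := by
    have h1 : ∑ i, (gradΨ x' i - gradΨ z i) * (θ' i - x' i)
        = smdIP (gradΨ x' - gradΨ z) θ' - smdIP (gradΨ x' - gradΨ z) x' := by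
      rw [← smdIP_pair]
      exact Finset.sum_congr rfl fun i _ => by simp [Pi.sub_apply]
    rw [h1, smdIP_sub_left, smdIP_sub_left] at hopt
    linarith
  -- strong convexity between x and x'
  have hsc := strong_ip hstrong x x'
  -- mirror step written with smdIP
  have hmirIP : ∀ w, smdIP (gradΨ z) w = smdIP (gradΨ x) w - η * smdIP gv w := by
    intro w
    rw [hmir, smdIP_sub_left, smdIP_smul_left]
  -- dual norm bounds
  have hd1 : smdIP gv x - smdIP gv x' ≤ Bg * N (x' - x) := by
    have := smdIP_le hNtri hNsmul hNdef gv x x'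
    have hrev := N_sub_rev hNtri hNsmul x x'
    have hNn := N_nonneg hNtri hNsmul (x - x')
    nlinarith [N_nonneg hNtri hNsmul (x' - x)]
  have hquad : η * (Bg * N (x' - x)) - (1/2) * (N (x' - x))^2 ≤ η^2 * Bg^2 / 2 := by
    nlinarith [sq_nonneg (η * Bg - N (x' - x))]
  rw [bregman_eq, bregman_eq]
  have e1 := hmirIP x
  have e2 := hmirIP θ'
  have e3 := hmirIP x'
  nlinarith [hopt', hsc, hd1, hquad, mul_le_mul_of_nonneg_left hd1 hη.le]

end Regret

section RegretSum

variable {n : ℕ} {Θ : Set (Fin n → ℝ)} (hΘconv : Convex ℝ Θ)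
    {N : (Fin n → ℝ) → ℝ}
    (hNtri : ∀ x y, N (x + y) ≤ N x + N y)
    (hNsmul : ∀ (c : ℝ) x, N (c • x) = |c| * N x)
    (hNdef : ∀ x, N x = 0 → x = 0)
    {Ψ : (Fin n → ℝ) → ℝ} {gradΨ : (Fin n → ℝ) → (Fin n → ℝ)}
    (hΨnonneg : ∀ x, 0 ≤ Ψ x)
    (hΨdiff : ∀ x, HasFDerivAt Ψ
      (∑ i, gradΨ x i • (ContinuousLinearMap.proj i : (Fin n → ℝ) →L[ℝ] ℝ)) x)
    (hstrong : ∀ x y,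
      Ψ x + (∑ i, gradΨ x i * (y i - x i)) + (1 / 2) * (N (y - x)) ^ 2 ≤ Ψ y)
    {BΨ : ℝ} (hBΨ : ∀ x ∈ Θ, Ψ x ≤ BΨ)

include hΘconv hΨdiff hstrong hΨnonneg hBΨ in
/-- The Bregman divergence to the initial point is at most `BΨ`. -/
lemma bregman_init_le {θ0 : Fin n → ℝ} (hinit : θ0 ∈ Θ ∧ ∀ y ∈ Θ, Ψ θ0 ≤ Ψ y)
    {θ' : Fin n → ℝ} (hθ' : θ' ∈ Θ) : bregman Ψ gradΨ θ' θ0 ≤ BΨ := by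
  have hopt : 0 ≤ ∑ i, (gradΨ θ0 i - 0) * (θ' i - θ0 i) := by
    refine grad_opt hΘconv hΨdiff 0 hinit.1 ?_ hθ'
    intro y hy
    simp only [Pi.zero_apply, zero_mul, Finset.sum_const_zero, sub_zero]
    exact hinit.2 y hy
  have hopt' : 0 ≤ smdIP (gradΨ θ0) θ' - smdIP (gradΨ θ0) θ0 := by
    have : ∑ i, (gradΨ θ0 i - 0) * (θ' i - θ0 i) = ∑ i, gradΨ θ0 i * (θ' i - θ0 i) := by
      exact Finset.sum_congr rfl fun i _ => by ring
    rw [this, smdIP_pair] at hopt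
    exact hopt
  rw [bregman_eq]
  have h1 := hΨnonneg θ0
  have h2 := hBΨ θ' hθ'
  linarith

include hstrong in
lemma bregman_nonneg (a b : Fin n → ℝ) : 0 ≤ bregman Ψ gradΨ a b := by
  have := strong_ip hstrong b a
  rw [bregman_eq]
  nlinarith [sq_nonneg (N (a - b))]

include hΘconv hΨdiff hstrong hΨnonneg hBΨ hNtri hNsmul in
/-- Distance to the initial point. -/
lemma dist_init_le {θ0 : Fin n → ℝ} (hinit : θ0 ∈ Θ ∧ ∀ y ∈ Θ, Ψ θ0 ≤ Ψ y)
    {q : Fin n → ℝ} (hq : q ∈ Θ) : N (q - θ0) ≤ Real.sqrt (2 * BΨ) := by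
  have hopt : 0 ≤ ∑ i, (gradΨ θ0 i - 0) * (q i - θ0 i) := by
    refine grad_opt hΘconv hΨdiff 0 hinit.1 ?_ hq
    intro y hy
    simp only [Pi.zero_apply, zero_mul, Finset.sum_const_zero, sub_zero]
    exact hinit.2 y hy
  have hopt' : 0 ≤ smdIP (gradΨ θ0) q - smdIP (gradΨ θ0) θ0 := by
    have : ∑ i, (gradΨ θ0 i - 0) * (q i - θ0 i) = ∑ i, gradΨ θ0 i * (q i - θ0 i) := by
      exact Finset.sum_congr rfl fun i _ => by ring
    rw [this, smdIP_pair] at hopt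
    exact hopt
  have hsc := strong_ip hstrong θ0 q
  have hsq : (N (q - θ0))^2 ≤ 2 * BΨ := by
    have := hΨnonneg θ0
    have := hBΨ q hq
    nlinarith
  have hNn := N_nonneg hNtri hNsmul (q - θ0)
  have := Real.sqrt_le_sqrt hsq
  rwa [Real.sqrt_sq hNn] at this

include hΘconv hΨdiff hstrong hΨnonneg hBΨ hNtri hNsmul in
lemma diam_le {θ0 : Fin n → ℝ} (hinit : θ0 ∈ Θ ∧ ∀ y ∈ Θ, Ψ θ0 ≤ Ψ y)
    {p q : Fin n → ℝ} (hp : p ∈ Θ) (hq : q ∈ Θ) :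
    N (p - q) ≤ 2 * Real.sqrt (2 * BΨ) := by
  have h1 := dist_init_le hΘconv hNtri hNsmul hΨnonneg hΨdiff hstrong hBΨ hinit hp
  have h2 := dist_init_le hΘconv hNtri hNsmul hΨnonneg hΨdiff hstrong hBΨ hinit hq
  have htri := hNtri (p - θ0) (θ0 - q)
  have : p - θ0 + (θ0 - q) = p - q := by abel
  rw [this] at htri
  have := N_sub_rev hNtri hNsmul q θ0
  linarith

include hΘconv hNtri hNsmul hNdef hΨnonneg hΨdiff hstrong hBΨ in
/-- Summed regret bound for the stochastic gradients. -/
lemma regret_sum {Bg η : ℝ} (hη : 0 < η) (hBg : 0 ≤ Bg) {T : ℕ}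
    {θ θt g : ℕ → Fin n → ℝ}
    (hinit : θ 0 ∈ Θ ∧ ∀ y ∈ Θ, Ψ (θ 0) ≤ Ψ y)
    (hgb : ∀ t < T, dualNorm N (g t) ≤ Bg)
    (hmirror : ∀ t < T, gradΨ (θt (t+1)) = gradΨ (θ t) - η • g t)
    (hproj : ∀ t < T, θ (t+1) ∈ Θ ∧
      ∀ y ∈ Θ, bregman Ψ gradΨ (θ (t+1)) (θt (t+1)) ≤ bregman Ψ gradΨ y (θt (t+1)))
    {θ' : Fin n → ℝ} (hθ' : θ' ∈ Θ) :
    ∑ t ∈ Finset.range T, (smdIP (g t) (θ t) - smdIP (g t) θ')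
      ≤ BΨ / η + T * η * Bg^2 / 2 := by
  have hΘt : ∀ t ≤ T, θ t ∈ Θ := by
    intro t
    induction t with
    | zero => intro _; exact hinit.1
    | succ k ih => intro hk; exact (hproj k (by omega)).1
  have hstep : ∀ t < T, η * (smdIP (g t) (θ t) - smdIP (g t) θ')
      ≤ bregman Ψ gradΨ θ' (θ t) - bregman Ψ gradΨ θ' (θ (t+1)) + η^2 * Bg^2 / 2 :=
    fun t ht => smd_step hΘconv hNtri hNsmul hNdef hΨdiff hstrong hη hBg
      (hΘt t (le_of_lt ht)) hθ' (hgb t ht) (hmirror t ht) (hproj t ht)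
  have hsum : η * ∑ t ∈ Finset.range T, (smdIP (g t) (θ t) - smdIP (g t) θ')
      ≤ bregman Ψ gradΨ θ' (θ 0) - bregman Ψ gradΨ θ' (θ T)
        + T * (η^2 * Bg^2 / 2) := by
    rw [Finset.mul_sum]
    calc ∑ t ∈ Finset.range T, η * (smdIP (g t) (θ t) - smdIP (g t) θ')
        ≤ ∑ t ∈ Finset.range T,
            (bregman Ψ gradΨ θ' (θ t) - bregman Ψ gradΨ θ' (θ (t+1)) + η^2 * Bg^2 / 2) :=
          Finset.sum_le_sum fun t ht => hstep t (Finset.mem_range.mp ht)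
      _ = (∑ t ∈ Finset.range T,
            (bregman Ψ gradΨ θ' (θ t) - bregman Ψ gradΨ θ' (θ (t+1))))
          + T * (η^2 * Bg^2 / 2) := by
          rw [Finset.sum_add_distrib, Finset.sum_const, Finset.card_range]
          ring
      _ = bregman Ψ gradΨ θ' (θ 0) - bregman Ψ gradΨ θ' (θ T)
          + T * (η^2 * Bg^2 / 2) := by
          rw [Finset.sum_range_sub' (fun t => bregman Ψ gradΨ θ' (θ t))]
  have hb0 := bregman_init_le hΘconv hΨnonneg hΨdiff hstrong hBΨ hinit hθ'
  have hbT := bregman_nonneg hstrong (N := N) θ' (θ T)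
  have hmain : η * ∑ t ∈ Finset.range T, (smdIP (g t) (θ t) - smdIP (g t) θ')
      ≤ BΨ + T * (η^2 * Bg^2 / 2) := by linarith
  have hdiv : ∑ t ∈ Finset.range T, (smdIP (g t) (θ t) - smdIP (g t) θ')
      ≤ (BΨ + T * (η^2 * Bg^2 / 2)) / η := by
    rw [le_div_iff₀ hη]
    linarith [hmain]
  calc ∑ t ∈ Finset.range T, (smdIP (g t) (θ t) - smdIP (g t) θ')
      ≤ (BΨ + T * (η^2 * Bg^2 / 2)) / η := hdiv
    _ = BΨ / η + T * η * Bg^2 / 2 := by field_simp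

end RegretSum

section Azuma

variable {Ω : Type*} {m0 : MeasurableSpace Ω} {P : Measure Ω} [IsProbabilityMeasure P]

lemma exp_le_chord {c lam x : ℝ} (hc : 0 < c) (hx : |x| ≤ c) :
    Real.exp (lam * x) ≤ Real.cosh (lam * c)
      + ((Real.exp (lam * c) - Real.exp (-(lam * c))) / (2 * c)) * x := by
  have hx1 : -c ≤ x := neg_le_of_abs_le hx
  have hx2 : x ≤ c := le_of_abs_le hx
  set a : ℝ := (c + x) / (2 * c) with ha
  set b : ℝ := (c - x) / (2 * c) with hb
  have hab : a + b = 1 := by rw [ha, hb]; field_simp; ring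
  have han : 0 ≤ a := by
    rw [ha]; apply div_nonneg (by linarith) (by linarith)
  have hbn : 0 ≤ b := by
    rw [hb]; apply div_nonneg (by linarith) (by linarith)
  have hconv := convexOn_exp.2 (Set.mem_univ (lam * c)) (Set.mem_univ (-(lam * c)))
    han hbn hab
  have harg : a • (lam * c) + b • (-(lam * c)) = lam * x := by
    simp only [smul_eq_mul, ha, hb]
    field_simp
    ring
  rw [harg] at hconv
  calc Real.exp (lam * x) ≤ a * Real.exp (lam * c) + b * Real.exp (-(lam * c)) := by
        simpa using hconv
    _ = Real.cosh (lam * c)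
        + ((Real.exp (lam * c) - Real.exp (-(lam * c))) / (2 * c)) * x := by
        rw [Real.cosh_eq, ha, hb]
        have h2c : (2:ℝ) * c ≠ 0 := by positivity
        field_simp
        ring

lemma condexp_exp_le {m : MeasurableSpace Ω} (hm : m ≤ m0)
    {X : Ω → ℝ} (hX : AEStronglyMeasurable[m0] X P) {c lam : ℝ} (hc : 0 ≤ c)
    (hbdd : ∀ᵐ ω ∂P, |X ω| ≤ c) (hcond : P[X|m] =ᵐ[P] 0) :
    P[fun ω => Real.exp (lam * X ω)|m]
      ≤ᵐ[P] fun _ => Real.exp (lam ^ 2 * c ^ 2 / 2) := by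
  have hXint : Integrable X P :=
    (integrable_const c).mono' hX (hbdd.mono fun ω h => by simpa using h)
  have hexpmeas : AEStronglyMeasurable[m0] (fun ω => Real.exp (lam * X ω)) P :=
    Real.continuous_exp.comp_aestronglyMeasurable (hX.const_mul lam)
  have hexpint : Integrable (fun ω => Real.exp (lam * X ω)) P := by
    refine (integrable_const (Real.exp (|lam| * c))).mono' hexpmeas ?_
    filter_upwards [hbdd] with ω h
    rw [Real.norm_eq_abs, abs_of_pos (Real.exp_pos _)]
    refine Real.exp_le_exp.mpr ?_
    calc lam * X ω ≤ |lam * X ω| := le_abs_self _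
      _ = |lam| * |X ω| := abs_mul _ _
      _ ≤ |lam| * c := mul_le_mul_of_nonneg_left h (abs_nonneg _)
  rcases hc.lt_or_eq with hcpos | hczero
  · set A : ℝ := Real.cosh (lam * c) with hA
    set B : ℝ := (Real.exp (lam * c) - Real.exp (-(lam * c))) / (2 * c) with hB
    have hptwise : (fun ω => Real.exp (lam * X ω)) ≤ᵐ[P] fun ω => A + B * X ω := by
      filter_upwards [hbdd] with ω h
      exact exp_le_chord hcpos h
    have hABint : Integrable (fun ω => A + B * X ω) P :=
      (integrable_const A).add (hXint.const_mul B)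
    have hmono := condExp_mono (m := m) hexpint hABint hptwise
    have heq1 : P[fun ω => A + B * X ω|m] =ᵐ[P] fun _ => A := by
      have h1 : P[fun ω => A + B * X ω|m]
          =ᵐ[P] P[fun _ => A|m] + P[fun ω => B * X ω|m] :=
        condExp_add (integrable_const A) (hXint.const_mul B) m
      have h2 : P[fun _ : Ω => A|m] = fun _ => A := condExp_const hm A
      have h3 : P[fun ω => B * X ω|m] =ᵐ[P] fun ω => B * (P[X|m]) ω := by
        have := condExp_smul (μ := P) (m := m) B X
        exact this
      have h4 : (fun ω => B * (P[X|m]) ω) =ᵐ[P] fun _ => (0:ℝ) := by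
        filter_upwards [hcond] with ω h
        simp [h]
      calc P[fun ω => A + B * X ω|m]
          =ᵐ[P] P[fun _ => A|m] + P[fun ω => B * X ω|m] := h1
        _ =ᵐ[P] fun _ => A := by
            rw [h2]
            filter_upwards [h3, h4] with ω e3 e4
            simp only [Pi.add_apply]
            rw [e3, e4]
            ring
    have hAle : A ≤ Real.exp (lam ^ 2 * c ^ 2 / 2) := by
      calc A ≤ Real.exp ((lam * c) ^ 2 / 2) := Real.cosh_le_exp_half_sq _
        _ = Real.exp (lam ^ 2 * c ^ 2 / 2) := by rw [mul_pow]
    filter_upwards [hmono, heq1] with ω' h1 h2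
    calc (P[fun ω => Real.exp (lam * X ω)|m]) ω'
        ≤ (P[fun ω => A + B * X ω|m]) ω' := h1
      _ = A := h2
      _ ≤ Real.exp (lam ^ 2 * c ^ 2 / 2) := hAle
  · have hX0 : X =ᵐ[P] fun _ => (0:ℝ) := by
      filter_upwards [hbdd] with ω h
      rw [← hczero] at h
      exact abs_nonpos_iff.mp h
    have hexp1 : (fun ω => Real.exp (lam * X ω)) =ᵐ[P] fun _ => (1:ℝ) := by
      filter_upwards [hX0] with ω h
      simp [h]
    have := condExp_congr_ae (m := m) hexp1
    rw [condExp_const hm (1:ℝ)] at this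
    filter_upwards [this] with ω' h
    rw [h]
    have : (0:ℝ) ≤ lam ^ 2 * c ^ 2 / 2 := by positivity
    simpa using Real.exp_le_exp.mpr this

end Azuma

section Azuma2

variable {Ω : Type*} {m0 : MeasurableSpace Ω} {P : Measure Ω} [IsProbabilityMeasure P]

lemma mgf_sum_le (ℱ : Filtration ℕ m0) {X : ℕ → Ω → ℝ} {c lam : ℝ}
    (hc : 0 ≤ c)
    (hadp : ∀ t, StronglyMeasurable[ℱ (t + 1)] (X t))
    (T : ℕ)
    (hbdd : ∀ t < T, ∀ᵐ ω ∂P, |X t ω| ≤ c)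
    (hcond : ∀ t < T, P[X t|ℱ t] =ᵐ[P] 0) :
    ∫ ω, Real.exp (lam * ∑ t ∈ Finset.range T, X t ω) ∂P
      ≤ Real.exp (T * (lam ^ 2 * c ^ 2 / 2)) := by
  induction T with
  | zero => simp
  | succ k ih =>
    have ihk := ih (fun t ht => hbdd t (by omega)) (fun t ht => hcond t (by omega))
    -- measurability of partial sums
    have hSmeas : StronglyMeasurable[ℱ k] (fun ω => ∑ t ∈ Finset.range k, X t ω) := by
      apply Finset.stronglyMeasurable_fun_sum
      intro t ht
      exact (hadp t).mono (ℱ.mono (by simp at ht; omega))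
    have hYmeas : StronglyMeasurable[ℱ k]
        (fun ω => Real.exp (lam * ∑ t ∈ Finset.range k, X t ω)) :=
      Real.continuous_exp.comp_stronglyMeasurable (hSmeas.const_mul lam)
    have hYmeas0 : AEStronglyMeasurable
        (fun ω => Real.exp (lam * ∑ t ∈ Finset.range k, X t ω)) P :=
      (hYmeas.mono (ℱ.le k)).aestronglyMeasurable
    have hZmeas0 : AEStronglyMeasurable (fun ω => Real.exp (lam * X k ω)) P :=
      (Real.continuous_exp.comp_stronglyMeasurable
        (((hadp k).mono (ℱ.le (k+1))).const_mul lam)).aestronglyMeasurable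
    -- a.e. bounds
    have hYbdd : ∀ᵐ ω ∂P, Real.exp (lam * ∑ t ∈ Finset.range k, X t ω)
        ≤ Real.exp (|lam| * (k * c)) := by
      have hall : ∀ᵐ ω ∂P, ∀ t ∈ Finset.range k, |X t ω| ≤ c := by
        have h1 : ∀ᵐ ω ∂P, ∀ t : ℕ, t < k → |X t ω| ≤ c := by
          rw [MeasureTheory.ae_all_iff]
          intro t
          rcases lt_or_ge t k with ht | ht
          · exact (hbdd t (by omega)).mono fun ω h _ => h
          · exact MeasureTheory.ae_of_all _ fun ω ht' => absurd ht' (by omega)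
        filter_upwards [h1] with ω h t ht
        exact h t (Finset.mem_range.mp ht)
      filter_upwards [hall] with ω h
      refine Real.exp_le_exp.mpr ?_
      calc lam * ∑ t ∈ Finset.range k, X t ω
          ≤ |lam * ∑ t ∈ Finset.range k, X t ω| := le_abs_self _
        _ = |lam| * |∑ t ∈ Finset.range k, X t ω| := abs_mul _ _
        _ ≤ |lam| * (k * c) := by
            refine mul_le_mul_of_nonneg_left ?_ (abs_nonneg _)
            calc |∑ t ∈ Finset.range k, X t ω| ≤ ∑ t ∈ Finset.range k, |X t ω| :=
                Finset.abs_sum_le_sum_abs _ _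
              _ ≤ ∑ _t ∈ Finset.range k, c := Finset.sum_le_sum h
              _ = k * c := by rw [Finset.sum_const, Finset.card_range]; simp
    have hZbdd : ∀ᵐ ω ∂P, Real.exp (lam * X k ω) ≤ Real.exp (|lam| * c) := by
      filter_upwards [hbdd k (by omega)] with ω h
      refine Real.exp_le_exp.mpr ?_
      calc lam * X k ω ≤ |lam * X k ω| := le_abs_self _
        _ = |lam| * |X k ω| := abs_mul _ _
        _ ≤ |lam| * c := mul_le_mul_of_nonneg_left h (abs_nonneg _)
    -- integrability
    have hYint : Integrable (fun ω => Real.exp (lam * ∑ t ∈ Finset.range k, X t ω)) P := by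
      refine (integrable_const (Real.exp (|lam| * (k * c)))).mono' hYmeas0 ?_
      filter_upwards [hYbdd] with ω h
      rwa [Real.norm_eq_abs, abs_of_pos (Real.exp_pos _)]
    have hprodint : Integrable (fun ω =>
        Real.exp (lam * ∑ t ∈ Finset.range k, X t ω) * Real.exp (lam * X k ω)) P := by
      refine (integrable_const (Real.exp (|lam| * (k * c)) * Real.exp (|lam| * c))).mono'
        (hYmeas0.mul hZmeas0) ?_
      filter_upwards [hYbdd, hZbdd] with ω h1 h2
      rw [Real.norm_eq_abs, abs_of_pos (mul_pos (Real.exp_pos _) (Real.exp_pos _))]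
      exact mul_le_mul h1 h2 (Real.exp_pos _).le (Real.exp_pos _).le
    have hZint : Integrable (fun ω => Real.exp (lam * X k ω)) P := by
      refine (integrable_const (Real.exp (|lam| * c))).mono' hZmeas0 ?_
      filter_upwards [hZbdd] with ω h
      rwa [Real.norm_eq_abs, abs_of_pos (Real.exp_pos _)]
    -- split the exponential
    have hsplit : (fun ω => Real.exp (lam * ∑ t ∈ Finset.range (k+1), X t ω))
        = fun ω => Real.exp (lam * ∑ t ∈ Finset.range k, X t ω)
            * Real.exp (lam * X k ω) := by
      funext ω
      rw [Finset.sum_range_succ, ← Real.exp_add]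
      ring_nf
    -- conditional expectation step
    have hpull := condExp_mul_of_stronglyMeasurable_left hYmeas hprodint hZint
    have hcmgf := condexp_exp_le (lam := lam) (ℱ.le k)
      ((hadp k).mono (ℱ.le (k+1))).aestronglyMeasurable hc (hbdd k (by omega))
      (hcond k (by omega))
    have hcond_le : P[fun ω => Real.exp (lam * ∑ t ∈ Finset.range k, X t ω)
          * Real.exp (lam * X k ω)|ℱ k]
        ≤ᵐ[P] fun ω => Real.exp (lam * ∑ t ∈ Finset.range k, X t ω)
            * Real.exp (lam ^ 2 * c ^ 2 / 2) := by
      have hfuneq : (fun ω => Real.exp (lam * ∑ t ∈ Finset.range k, X t ω)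
            * Real.exp (lam * X k ω))
          = (fun ω => Real.exp (lam * ∑ t ∈ Finset.range k, X t ω))
            * (fun ω => Real.exp (lam * X k ω)) := rfl
      rw [hfuneq]
      filter_upwards [hpull, hcmgf] with ω h1 h2
      rw [h1]
      simp only [Pi.mul_apply]
      exact mul_le_mul_of_nonneg_left h2 (Real.exp_pos _).le
    calc ∫ ω, Real.exp (lam * ∑ t ∈ Finset.range (k+1), X t ω) ∂P
        = ∫ ω, (P[fun ω' => Real.exp (lam * ∑ t ∈ Finset.range k, X t ω')
            * Real.exp (lam * X k ω')|ℱ k]) ω ∂P := by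
          rw [integral_condExp (ℱ.le k)]
          rw [hsplit]
      _ ≤ ∫ ω, Real.exp (lam * ∑ t ∈ Finset.range k, X t ω)
            * Real.exp (lam ^ 2 * c ^ 2 / 2) ∂P := by
          refine integral_mono_ae integrable_condExp (hYint.mul_const _) hcond_le
      _ = (∫ ω, Real.exp (lam * ∑ t ∈ Finset.range k, X t ω) ∂P)
            * Real.exp (lam ^ 2 * c ^ 2 / 2) := by
          rw [integral_mul_const]
      _ ≤ Real.exp (k * (lam ^ 2 * c ^ 2 / 2)) * Real.exp (lam ^ 2 * c ^ 2 / 2) := by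
          exact mul_le_mul_of_nonneg_right ihk (Real.exp_pos _).le
      _ = Real.exp ((k + 1 : ℕ) * (lam ^ 2 * c ^ 2 / 2)) := by
          rw [← Real.exp_add]
          congr 1
          push_cast
          ring

end Azuma2

section Azuma3
variable {Ω : Type*} {m0 : MeasurableSpace Ω} {P : Measure Ω} [IsProbabilityMeasure P]

lemma azuma_tail (ℱ : Filtration ℕ m0) {X : ℕ → Ω → ℝ} {c lam a : ℝ}
    (hc : 0 ≤ c) (hlam : 0 ≤ lam)
    (hadp : ∀ t, StronglyMeasurable[ℱ (t + 1)] (X t)) (T : ℕ)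
    (hbdd : ∀ t < T, ∀ᵐ ω ∂P, |X t ω| ≤ c)
    (hcond : ∀ t < T, P[X t|ℱ t] =ᵐ[P] 0) :
    P {ω | a ≤ ∑ t ∈ Finset.range T, X t ω}
      ≤ ENNReal.ofReal (Real.exp (T * (lam ^ 2 * c ^ 2 / 2) - lam * a)) := by
  set S : Ω → ℝ := fun ω => ∑ t ∈ Finset.range T, X t ω with hS
  have hSmeas : AEStronglyMeasurable S P := by
    apply StronglyMeasurable.aestronglyMeasurable
    apply Finset.stronglyMeasurable_fun_sum
    intro t ht
    exact (hadp t).mono (ℱ.le (t + 1))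
  have hSbdd : ∀ᵐ ω ∂P, Real.exp (lam * S ω) ≤ Real.exp (|lam| * (T * c)) := by
    have h1 : ∀ᵐ ω ∂P, ∀ t : ℕ, t < T → |X t ω| ≤ c := by
      rw [MeasureTheory.ae_all_iff]
      intro t
      rcases lt_or_ge t T with ht | ht
      · exact (hbdd t (by omega)).mono fun ω h _ => h
      · exact MeasureTheory.ae_of_all _ fun ω ht' => absurd ht' (by omega)
    filter_upwards [h1] with ω h
    refine Real.exp_le_exp.mpr ?_
    calc lam * S ω ≤ |lam * S ω| := le_abs_self _
      _ = |lam| * |S ω| := abs_mul _ _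
      _ ≤ |lam| * (T * c) := by
          refine mul_le_mul_of_nonneg_left ?_ (abs_nonneg _)
          calc |S ω| ≤ ∑ t ∈ Finset.range T, |X t ω| := Finset.abs_sum_le_sum_abs _ _
            _ ≤ ∑ _t ∈ Finset.range T, c :=
                Finset.sum_le_sum fun t ht => h t (Finset.mem_range.mp ht)
            _ = T * c := by rw [Finset.sum_const, Finset.card_range]; simp
  have hint : Integrable (fun ω => Real.exp (lam * S ω)) P := by
    refine (integrable_const (Real.exp (|lam| * (T * c)))).mono'
      (Real.continuous_exp.comp_aestronglyMeasurable (hSmeas.const_mul lam)) ?_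
    filter_upwards [hSbdd] with ω h
    rwa [Real.norm_eq_abs, abs_of_pos (Real.exp_pos _)]
  have hmarkov := ProbabilityTheory.measure_ge_le_exp_mul_mgf (X := S) (μ := P) a hlam hint
  have hmgf : ProbabilityTheory.mgf S P lam ≤ Real.exp (T * (lam ^ 2 * c ^ 2 / 2)) :=
    mgf_sum_le ℱ hc hadp T hbdd hcond
  have htoReal : (P {ω | a ≤ S ω}).toReal
      ≤ Real.exp (T * (lam ^ 2 * c ^ 2 / 2) - lam * a) := by
    calc (P {ω | a ≤ S ω}).toReal ≤ Real.exp (-lam * a) * ProbabilityTheory.mgf S P lam :=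
        hmarkov
      _ ≤ Real.exp (-lam * a) * Real.exp (T * (lam ^ 2 * c ^ 2 / 2)) :=
        mul_le_mul_of_nonneg_left hmgf (Real.exp_pos _).le
      _ = Real.exp (T * (lam ^ 2 * c ^ 2 / 2) - lam * a) := by
        rw [← Real.exp_add]; ring_nf
  rw [← ENNReal.ofReal_toReal (measure_ne_top P _)]
  exact ENNReal.ofReal_le_ofReal htoReal

end Azuma3

section Helpers

variable {n : ℕ} {N : (Fin n → ℝ) → ℝ}
  (hNtri : ∀ x y, N (x + y) ≤ N x + N y)
  (hNsmul : ∀ (c : ℝ) x, N (c • x) = |c| * N x)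
  (hNdef : ∀ x, N x = 0 → x = 0)

include hNtri hNsmul hNdef in
lemma dualNorm_le_of_rat {v : Fin n → ℝ} {B : ℝ} (hB : 0 ≤ B)
    (h : ∀ q : Fin n → ℚ, N (fun i => (q i : ℝ)) ≤ 1 → ∑ i, v i * (q i : ℝ) ≤ B) :
    dualNorm N v ≤ B := by
  obtain ⟨C, hC, hCb⟩ := N_le_const hNtri hNsmul
  -- Step 1: the bound holds for all x with N x < 1
  have step1 : ∀ x : Fin n → ℝ, N x < 1 → ∑ i, v i * x i ≤ B := by
    intro x hx
    refine le_of_forall_pos_le_add fun ε hε => ?_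
    have hNx0 := N_nonneg hNtri hNsmul x
    set r : ℝ := min ((1 - N x) / (2 * (C + 1))) (ε / ((∑ i, |v i|) + 1)) with hr
    have hvsum : (0:ℝ) ≤ ∑ i, |v i| := Finset.sum_nonneg fun i _ => abs_nonneg _
    have hrpos : 0 < r := by
      apply lt_min
      · apply div_pos (by linarith) (by linarith)
      · apply div_pos hε (by linarith)
    have hch : ∀ i : Fin n, ∃ q : ℚ, |x i - (q:ℝ)| < r := by
      intro i
      obtain ⟨q, hq⟩ := exists_rat_near (x i) hrpos
      exact ⟨q, hq⟩
    choose q hq using hch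
    set qr : Fin n → ℝ := fun i => ((q i : ℝ)) with hqr
    have hdiff : ∀ i, |qr i - x i| ≤ r := fun i => by
      rw [abs_sub_comm]; exact (hq i).le
    have hnorm : ‖qr - x‖ ≤ r := by
      rw [pi_norm_le_iff_of_nonneg hrpos.le]
      intro i
      simpa [Real.norm_eq_abs] using hdiff i
    have hNq : N qr ≤ 1 := by
      have h1 : N qr ≤ N x + N (qr - x) := by
        have := hNtri x (qr - x)
        simpa using this
      have h2 : N (qr - x) ≤ C * r := (hCb _).trans
        (mul_le_mul_of_nonneg_left hnorm hC.le)
      have h3 : C * r ≤ C * ((1 - N x) / (2 * (C + 1))) :=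
        mul_le_mul_of_nonneg_left (min_le_left _ _) hC.le
      have h4 : C * ((1 - N x) / (2 * (C + 1))) ≤ (1 - N x) / 2 := by
        rw [mul_div_assoc', div_le_div_iff₀ (by linarith) (by norm_num : (0:ℝ) < 2)]
        nlinarith
      linarith
    have hB1 := h q hNq
    have hclose : ∑ i, v i * x i - ∑ i, v i * qr i ≤ (∑ i, |v i|) * r := by
      rw [← Finset.sum_sub_distrib]
      calc ∑ i, (v i * x i - v i * qr i) ≤ ∑ i, |v i| * r := by
            refine Finset.sum_le_sum fun i _ => ?_
            calc v i * x i - v i * qr i = v i * (x i - qr i) := by ring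
              _ ≤ |v i * (x i - qr i)| := le_abs_self _
              _ = |v i| * |x i - qr i| := abs_mul _ _
              _ ≤ |v i| * r := by
                  refine mul_le_mul_of_nonneg_left ?_ (abs_nonneg _)
                  rw [abs_sub_comm]; exact hdiff i
        _ = (∑ i, |v i|) * r := (Finset.sum_mul _ _ _).symm
    have hrε : (∑ i, |v i|) * r ≤ ε := by
      have h5 : r ≤ ε / ((∑ i, |v i|) + 1) := min_le_right _ _
      calc (∑ i, |v i|) * r ≤ (∑ i, |v i|) * (ε / ((∑ i, |v i|) + 1)) :=
            mul_le_mul_of_nonneg_left h5 hvsum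
        _ = ε * ((∑ i, |v i|) / ((∑ i, |v i|) + 1)) := by ring
        _ ≤ ε * 1 := by
            refine mul_le_mul_of_nonneg_left ?_ hε.le
            rw [div_le_one (by linarith)]
            linarith
        _ = ε := mul_one ε
    linarith
  -- Step 2: extend to N x ≤ 1
  have step2 : ∀ x : Fin n → ℝ, N x ≤ 1 → ∑ i, v i * x i ≤ B := by
    intro x hx
    refine le_of_forall_pos_le_add fun ε hε => ?_
    set y : ℝ := ∑ i, v i * x i with hy
    set s : ℝ := min (1/2) (ε / (|y| + 1)) with hs
    have hspos : 0 < s := lt_min (by norm_num) (div_pos hε (by positivity))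
    have hs1 : s ≤ 1/2 := min_le_left _ _
    have hscale : N ((1 - s) • x) < 1 := by
      rw [hNsmul, abs_of_pos (by linarith)]
      have := N_nonneg hNtri hNsmul x
      nlinarith
    have := step1 _ hscale
    have hsum : ∑ i, v i * ((1 - s) • x) i = (1 - s) * y := by
      rw [hy, Finset.mul_sum]
      exact Finset.sum_congr rfl fun i _ => by simp [Pi.smul_apply]; ring
    rw [hsum] at this
    have hsy : s * y ≤ s * |y| := mul_le_mul_of_nonneg_left (le_abs_self _) hspos.le
    have hsε : s * |y| ≤ ε := by
      have h5 : s ≤ ε / (|y| + 1) := min_le_right _ _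
      calc s * |y| ≤ (ε / (|y| + 1)) * |y| :=
            mul_le_mul_of_nonneg_right h5 (abs_nonneg _)
        _ ≤ ε := by
            rw [div_mul_eq_mul_div, div_le_iff₀ (by positivity)]
            nlinarith [abs_nonneg y]
    nlinarith
  refine Real.sSup_le ?_ hB
  rintro y ⟨x, hx, rfl⟩
  exact step2 x hx

include hNtri hNsmul hNdef in
lemma eq_zero_of_dualNorm_nonpos {v : Fin n → ℝ} (h : dualNorm N v ≤ 0) : v = 0 := by
  have hp := pairing_le_dualNorm_mul hNtri hNsmul hNdef v v
  have hN := N_nonneg hNtri hNsmul v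
  have hsq : ∑ i, v i * v i ≤ 0 := by nlinarith
  have : ∀ i ∈ Finset.univ, v i * v i = 0 := by
    refine (Finset.sum_eq_zero_iff_of_nonneg fun j _ => mul_self_nonneg (v j)).mp ?_
    have h0 : (0:ℝ) ≤ ∑ i, v i * v i :=
      Finset.sum_nonneg fun j _ => mul_self_nonneg (v j)
    linarith
  funext i
  exact mul_self_eq_zero.mp (this i (Finset.mem_univ i))

lemma final_prob {Ω : Type*} {m0 : MeasurableSpace Ω} (P : Measure Ω)
    [IsProbabilityMeasure P] (S : Set Ω) {δ : ℝ} (hδ : 0 ≤ δ)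
    (h : P Sᶜ ≤ ENNReal.ofReal δ) : ENNReal.ofReal (1 - δ) ≤ P S := by
  have h1 : (1:ENNReal) ≤ P S + P Sᶜ := by
    rw [← measure_univ (μ := P), ← Set.union_compl_self S]
    exact measure_union_le _ _
  have h2 : ENNReal.ofReal (1 - δ) = 1 - ENNReal.ofReal δ := by
    rw [ENNReal.ofReal_sub _ hδ, ENNReal.ofReal_one]
  rw [h2, tsub_le_iff_right]
  calc (1:ENNReal) ≤ P S + P Sᶜ := h1
    _ ≤ P S + ENNReal.ofReal δ := add_le_add_right h _

end Helpers

section CondexpBound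

variable {Ω : Type*} {m0 : MeasurableSpace Ω} {P : Measure Ω} [IsProbabilityMeasure P]
  {n : ℕ} {N : (Fin n → ℝ) → ℝ}
  (hNtri : ∀ x y, N (x + y) ≤ N x + N y)
  (hNsmul : ∀ (c : ℝ) x, N (c • x) = |c| * N x)
  (hNdef : ∀ x, N x = 0 → x = 0)

lemma single_pairing {v : Fin n → ℝ} (i : Fin n) :
    ∑ j, v j * (Pi.single i (1:ℝ) : Fin n → ℝ) j = v i := by
  rw [Finset.sum_eq_single i]
  · simp
  · intro j _ hj
    simp [Pi.single_apply, hj]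
  · simp

include hNtri hNsmul hNdef in
lemma integrable_coord {g : Ω → Fin n → ℝ} (hg : Measurable g) {Bg : ℝ}
    (hb : ∀ᵐ ω ∂P, dualNorm N (g ω) ≤ Bg) (i : Fin n) :
    Integrable (fun ω => g ω i) P := by
  refine (integrable_const (Bg * N (Pi.single i 1))).mono'
    ((measurable_pi_apply i).comp hg).aestronglyMeasurable ?_
  filter_upwards [hb] with ω h
  have habs := abs_pairing_le_dualNorm_mul hNtri hNsmul hNdef (g ω) (Pi.single i 1)
  rw [single_pairing] at habs
  rw [Real.norm_eq_abs]
  calc |g ω i| ≤ dualNorm N (g ω) * N (Pi.single i 1) := habs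
    _ ≤ Bg * N (Pi.single i 1) :=
      mul_le_mul_of_nonneg_right h (N_nonneg hNtri hNsmul _)

include hNtri hNsmul hNdef in
lemma dualNorm_condexp_le {m : MeasurableSpace Ω} (hm : m ≤ m0)
    {g : Ω → Fin n → ℝ} (hg : Measurable[m0] g) {Bg : ℝ} (hB : 0 ≤ Bg)
    (hb : ∀ᵐ ω ∂P, dualNorm N (g ω) ≤ Bg) :
    ∀ᵐ ω ∂P, dualNorm N (fun i => (P[fun ω' => g ω' i|m]) ω) ≤ Bg := by
  have hint : ∀ i, Integrable (fun ω => g ω i) P :=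
    integrable_coord hNtri hNsmul hNdef hg hb
  have key : ∀ q : Fin n → ℚ, N (fun i => (q i : ℝ)) ≤ 1 →
      ∀ᵐ ω ∂P, ∑ i, (P[fun ω' => g ω' i|m]) ω * (q i : ℝ) ≤ Bg := by
    intro q hq
    have hpt : ∀ᵐ ω ∂P, ∑ i, g ω i * (q i : ℝ) ≤ Bg := by
      filter_upwards [hb] with ω h
      have hpm := pairing_le_dualNorm_mul hNtri hNsmul hNdef (g ω) (fun i => (q i : ℝ))
      have hNn := N_nonneg hNtri hNsmul (fun i => ((q i : ℝ)))
      calc ∑ i, g ω i * (q i : ℝ)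
          ≤ dualNorm N (g ω) * N (fun i => (q i : ℝ)) := hpm
        _ ≤ Bg * 1 := mul_le_mul h hq hNn hB
        _ = Bg := mul_one _
    have hsumint : Integrable (fun ω => ∑ i, g ω i * (q i : ℝ)) P :=
      MeasureTheory.integrable_finset_sum _ fun i _ => (hint i).mul_const _
    have hmono := condExp_mono (m := m) hsumint (integrable_const Bg) hpt
    rw [condExp_const hm Bg] at hmono
    have hlin : P[fun ω => ∑ i, g ω i * (q i : ℝ)|m]
        =ᵐ[P] fun ω => ∑ i, (P[fun ω' => g ω' i|m]) ω * (q i : ℝ) := by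
      have h1 : (fun ω => ∑ i, g ω i * (q i : ℝ))
          = ∑ i, (fun ω => (q i : ℝ) • g ω i) := by
        funext ω
        rw [Finset.sum_apply]
        exact Finset.sum_congr rfl fun i _ => by simp [smul_eq_mul]; ring
      rw [h1]
      have h2 := condExp_finsetSum (μ := P) (m := m)
        (f := fun i => fun ω => (q i : ℝ) • g ω i) (s := Finset.univ)
        (fun i _ => ((hint i).const_mul _))
      refine h2.trans ?_
      have h3 : ∀ i : Fin n, P[fun ω => (q i : ℝ) • g ω i|m]
          =ᵐ[P] fun ω => (q i : ℝ) • (P[fun ω' => g ω' i|m]) ω := by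
        intro i
        have := condExp_smul (μ := P) (m := m) ((q i : ℝ)) (fun ω => g ω i)
        exact this
      have h4 : ∀ᵐ ω ∂P, ∀ i : Fin n, (P[fun ω' => (q i : ℝ) • g ω' i|m]) ω
          = (q i : ℝ) • (P[fun ω' => g ω' i|m]) ω := by
        rw [MeasureTheory.ae_all_iff]
        exact h3
      filter_upwards [h4] with ω h
      rw [Finset.sum_apply]
      exact Finset.sum_congr rfl fun i _ => by rw [h i]; simp [smul_eq_mul]; ring
    filter_upwards [hmono, hlin] with ω h1 h2
    rw [← h2]
    exact h1
  have hall : ∀ᵐ ω ∂P, ∀ q : Fin n → ℚ, N (fun i => (q i : ℝ)) ≤ 1 →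
      ∑ i, (P[fun ω' => g ω' i|m]) ω * (q i : ℝ) ≤ Bg := by
    rw [MeasureTheory.ae_all_iff]
    intro q
    by_cases hq : N (fun i => (q i : ℝ)) ≤ 1
    · exact (key q hq).mono fun ω h _ => h
    · exact MeasureTheory.ae_of_all _ fun ω h => absurd h hq
  filter_upwards [hall] with ω h
  exact dualNorm_le_of_rat hNtri hNsmul hNdef hB fun q hq => h q hq

end CondexpBound
lemma smd_num_ineq {u v w : ℝ} (hu0 : 0 ≤ u) (hv0 : 0 ≤ v) (hw0 : 0 ≤ w)
    (h : w ^ 2 = 2 * u ^ 2 + 32 * v ^ 2) : (3/2) * u + 8 * v ≤ 2 * w := by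
  have hsq : ((3/2) * u + 8 * v) ^ 2 ≤ (2 * w) ^ 2 := by
    nlinarith [sq_nonneg (23 * u - 48 * v), mul_nonneg hu0 hv0]
  have h5 := Real.sqrt_le_sqrt hsq
  rwa [Real.sqrt_sq (by positivity), Real.sqrt_sq (by positivity)] at h5

lemma smd_num_ineq2 {Bg u v w : ℝ} (hBg : 0 ≤ Bg) (h : (3/2) * u + 8 * v ≤ 2 * w) :
    (3/2) * (Bg * u) + 8 * Bg * v ≤ 2 * Bg * w := by
  nlinarith [mul_le_mul_of_nonneg_left h hBg]

set_option maxHeartbeats 4000000 in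
/-- **Stochastic mirror descent** (Theorem C.10).  In the setting of mirror
descent, but where each step uses a stochastic subgradient `ǧ^(t)` (an adapted
random vector, bounded by `B_ǧ` in dual norm almost surely, whose conditional
expectation given the past is a subgradient of `f_t` at `θ^(t)`), and with
step size `η = √(B_Ψ / (T B_ǧ²))`: for every `θ* ∈ Θ`, with probability at
least `1 − δ` over the draws of the stochastic subgradients,
`(1/T) ∑ₜ fₜ(θ^(t)) − (1/T) ∑ₜ fₜ(θ*) ≤ 2 B_ǧ √(2 B_Ψ (1 + 16 ln(1/δ)) / T)`. -/
theorem stochastic_mirror_descent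
    {n : ℕ}
    {Ω : Type*} {m0 : MeasurableSpace Ω} (P : Measure Ω) [IsProbabilityMeasure P]
    (ℱ : Filtration ℕ m0)
    (Θ : Set (Fin n → ℝ)) (hΘcomp : IsCompact Θ) (hΘconv : Convex ℝ Θ)
    (f : ℕ → (Fin n → ℝ) → ℝ) (hf : ∀ t, ConvexOn ℝ Θ (f t))
    -- `N` is a norm on `ℝ^n`
    (N : (Fin n → ℝ) → ℝ)
    (hNtri : ∀ x y, N (x + y) ≤ N x + N y)
    (hNsmul : ∀ (c : ℝ) x, N (c • x) = |c| * N x)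
    (hNdef : ∀ x, N x = 0 → x = 0)
    -- `Ψ` is nonnegative and differentiable, with gradient `gradΨ`
    (Ψ : (Fin n → ℝ) → ℝ) (gradΨ : (Fin n → ℝ) → (Fin n → ℝ))
    (hΨnonneg : ∀ x, 0 ≤ Ψ x)
    (hΨdiff : ∀ x, HasFDerivAt Ψ
      (∑ i, gradΨ x i • (ContinuousLinearMap.proj i : (Fin n → ℝ) →L[ℝ] ℝ)) x)
    -- `Ψ` is `1`-strongly convex w.r.t. `N`
    (hstrong : ∀ x y,
      Ψ x + (∑ i, gradΨ x i * (y i - x i)) + (1 / 2) * (N (y - x)) ^ 2 ≤ Ψ y)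
    (BΨ Bg δ : ℝ) (hδ : 0 < δ) (hBΨ : ∀ x ∈ Θ, Ψ x ≤ BΨ)
    (T : ℕ) (hT : 0 < T)
    (η : ℝ) (hη : η = Real.sqrt (BΨ / (T * Bg ^ 2)))
    (θs θtil : ℕ → Ω → Fin n → ℝ) (gs : ℕ → Ω → Fin n → ℝ)
    -- `θ^(1)` minimizes `Ψ` over `Θ`
    (hinit : ∀ ω, θs 0 ω ∈ Θ ∧ ∀ y ∈ Θ, Ψ (θs 0 ω) ≤ Ψ y)
    -- adaptedness
    (hθmeas : ∀ t, Measurable[ℱ t] (θs t))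
    (hgmeas : ∀ t, Measurable[ℱ (t + 1)] (gs t))
    -- the conditional expectation of `ǧ^(t)` is a subgradient of `f_t`
    -- at `θ^(t)`
    (hsub : ∀ t < T, ∀ᵐ ω ∂P, ∀ y ∈ Θ,
      f t (θs t ω) + ∑ i, (P[fun ω' => gs t ω' i|ℱ t]) ω * (y i - θs t ω i)
        ≤ f t y)
    -- almost-sure dual-norm bound
    (hgb : ∀ t < T, ∀ᵐ ω ∂P, dualNorm N (gs t ω) ≤ Bg)
    -- the mirror step: `∇Ψ(θ̃^(t+1)) = ∇Ψ(θ^(t)) − η ǧ^(t)`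
    (hmirror : ∀ t < T, ∀ ω, gradΨ (θtil (t + 1) ω) = gradΨ (θs t ω) - η • gs t ω)
    -- the Bregman projection step
    (hproj : ∀ t < T, ∀ ω, θs (t + 1) ω ∈ Θ ∧
      ∀ y ∈ Θ, bregman Ψ gradΨ (θs (t + 1) ω) (θtil (t + 1) ω)
        ≤ bregman Ψ gradΨ y (θtil (t + 1) ω)) :
    ∀ θ' ∈ Θ,
      ENNReal.ofReal (1 - δ) ≤ P {ω |
        (1 / (T : ℝ)) * ∑ t ∈ Finset.range T, f t (θs t ω)
          - (1 / (T : ℝ)) * ∑ t ∈ Finset.range T, f t θ'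
        ≤ 2 * Bg * Real.sqrt (2 * BΨ * (1 + 16 * Real.log (1 / δ)) / T)} := by
  intro θ' hθ'
  -- trivial case `1 ≤ δ`
  rcases le_or_gt 1 δ with hδ1 | hδ1
  · rw [ENNReal.ofReal_eq_zero.mpr (by linarith)]
    exact zero_le
  set L : ℝ := Real.log (1 / δ) with hLdef
  have hLpos : 0 < L := Real.log_pos (by rw [one_div]; exact (one_lt_inv₀ hδ).mpr hδ1)
  have haeNeBot : (MeasureTheory.ae P).NeBot :=
    MeasureTheory.ae_neBot.mpr (IsProbabilityMeasure.ne_zero P)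
  -- membership of the iterates
  have hmem : ∀ ω, ∀ t ≤ T, θs t ω ∈ Θ := by
    intro ω t
    induction t with
    | zero => intro _; exact (hinit ω).1
    | succ k _ => intro hk; exact (hproj k (by omega) ω).1
  obtain ⟨ω₀, hω₀⟩ := (hgb 0 hT).exists
  have hBg0 : 0 ≤ Bg :=
    le_trans (dualNorm_nonneg hNtri hNsmul hNdef (gs 0 ω₀)) hω₀
  have hBΨ0 : 0 ≤ BΨ := le_trans (hΨnonneg _) (hBΨ _ ((hinit ω₀).1))
  set Sset : Set Ω := {ω |
        (1 / (T : ℝ)) * ∑ t ∈ Finset.range T, f t (θs t ω)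
          - (1 / (T : ℝ)) * ∑ t ∈ Finset.range T, f t θ'
        ≤ 2 * Bg * Real.sqrt (2 * BΨ * (1 + 16 * Real.log (1 / δ)) / T)} with hSset
  rcases hBg0.lt_or_eq with hBgpos | hBgzero
  swap
  · -- degenerate case `Bg = 0`
    have hgzero : ∀ t < T, ∀ᵐ ω ∂P, gs t ω = 0 := by
      intro t ht
      filter_upwards [hgb t ht] with ω h
      exact eq_zero_of_dualNorm_nonpos hNtri hNsmul hNdef (by rw [← hBgzero] at h; exact h)
    have hcz : ∀ t < T, ∀ᵐ ω ∂P, ∀ i, (P[fun ω' => gs t ω' i|ℱ t]) ω = 0 := by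
      intro t ht
      rw [MeasureTheory.ae_all_iff]
      intro i
      have h1 : (fun ω => gs t ω i) =ᵐ[P] fun _ => (0:ℝ) := by
        filter_upwards [hgzero t ht] with ω h
        rw [h]; rfl
      have h2 := condExp_congr_ae (m := ℱ t) h1
      rw [condExp_const (ℱ.le t) (0:ℝ)] at h2
      exact h2
    have hfle : ∀ᵐ ω ∂P, ∀ t, t < T → f t (θs t ω) ≤ f t θ' := by
      rw [MeasureTheory.ae_all_iff]
      intro t
      rcases lt_or_ge t T with ht | ht
      · filter_upwards [hsub t ht, hcz t ht] with ω h1 h2 _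
        have := h1 θ' hθ'
        have hz : ∑ i, (P[fun ω' => gs t ω' i|ℱ t]) ω * (θ' i - θs t ω i) = 0 :=
          Finset.sum_eq_zero fun i _ => by rw [h2 i]; ring
        linarith [this, hz.le]
      · exact MeasureTheory.ae_of_all _ fun ω ht' => absurd ht' (by omega)
    have hae : ∀ᵐ ω ∂P, ω ∈ Sset := by
      filter_upwards [hfle] with ω h
      rw [hSset]
      simp only [Set.mem_setOf_eq]
      have hsum : ∑ t ∈ Finset.range T, f t (θs t ω) ≤ ∑ t ∈ Finset.range T, f t θ' :=
        Finset.sum_le_sum fun t ht => h t (Finset.mem_range.mp ht)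
      have hT1 : (0:ℝ) ≤ 1 / (T:ℝ) := by positivity
      have hRHS : (0:ℝ) ≤ 2 * Bg * Real.sqrt (2 * BΨ * (1 + 16 * Real.log (1 / δ)) / T) :=
        mul_nonneg (by linarith) (Real.sqrt_nonneg _)
      have hmul := mul_le_mul_of_nonneg_left hsum hT1
      linarith
    refine final_prob P Sset hδ.le ?_
    have : P Ssetᶜ = 0 := by
      have := MeasureTheory.ae_iff.mp hae
      exact this
    rw [this]
    exact zero_le
  rcases hBΨ0.lt_or_eq with hBΨpos | hBΨzero
  swap
  · -- degenerate case `BΨ = 0`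
    have hsingle : ∀ p ∈ Θ, ∀ q ∈ Θ, p = q := by
      intro p hp q hq
      have := diam_le hΘconv hNtri hNsmul hΨnonneg hΨdiff hstrong hBΨ (hinit ω₀) hp hq
      rw [← hBΨzero] at this
      simp only [mul_zero, Real.sqrt_zero] at this
      have hnn := N_nonneg hNtri hNsmul (p - q)
      have : N (p - q) = 0 := le_antisymm (by linarith) hnn
      have := hNdef _ this
      exact sub_eq_zero.mp this
    have hall : ∀ ω, ω ∈ Sset := by
      intro ω
      rw [hSset]
      simp only [Set.mem_setOf_eq]
      have heq : ∀ t ∈ Finset.range T, f t (θs t ω) = f t θ' := by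
        intro t ht
        rw [hsingle (θs t ω) (hmem ω t (le_of_lt (Finset.mem_range.mp ht))) θ' hθ']
      rw [Finset.sum_congr rfl heq]
      have hRHS : (0:ℝ) ≤ 2 * Bg * Real.sqrt (2 * BΨ * (1 + 16 * Real.log (1 / δ)) / T) :=
        mul_nonneg (by linarith) (Real.sqrt_nonneg _)
      linarith
    have : Sset = Set.univ := Set.eq_univ_of_forall hall
    rw [this, measure_univ]
    exact ENNReal.ofReal_le_one.mpr (by linarith)
  -- main case
  -- main case
  have hTpos : (0:ℝ) < T := by exact_mod_cast hT
  have hηpos : 0 < η := by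
    rw [hη]
    exact Real.sqrt_pos.mpr (by positivity)
  set X : ℕ → Ω → ℝ := fun t ω =>
    ∑ i, ((P[fun ω' => gs t ω' i|ℱ t]) ω - gs t ω i) * (θs t ω i - θ' i) with hXdef
  set c : ℝ := 4 * Bg * Real.sqrt (2 * BΨ) with hcdef
  have hsq2BΨ : 0 < Real.sqrt (2 * BΨ) := Real.sqrt_pos.mpr (by linarith)
  have hcpos : 0 < c := by rw [hcdef]; positivity
  set a : ℝ := c * Real.sqrt (2 * T * L) with hadef
  have hsqTL : 0 < Real.sqrt (2 * T * L) := Real.sqrt_pos.mpr (by positivity)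
  have hapos : 0 < a := mul_pos hcpos hsqTL
  set lam : ℝ := a / (T * c ^ 2) with hlamdef
  have hlampos : 0 < lam := div_pos hapos (by positivity)
  have ha2 : a ^ 2 = c ^ 2 * (2 * T * L) := by
    rw [hadef, mul_pow, Real.sq_sqrt (by positivity)]
  -- measurability of the increments
  have hadp : ∀ t, StronglyMeasurable[ℱ (t + 1)] (X t) := by
    intro t
    apply Measurable.stronglyMeasurable
    apply Finset.measurable_sum
    intro i _
    have h1 : Measurable[ℱ (t + 1)] (fun ω => (P[fun ω' => gs t ω' i|ℱ t]) ω) :=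
      ((stronglyMeasurable_condExp (m := ℱ t)
        (f := fun ω' => gs t ω' i) (μ := P)).mono (ℱ.mono (Nat.le_succ t))).measurable
    have h2 : Measurable[ℱ (t + 1)] (fun ω => gs t ω i) :=
      (measurable_pi_apply i).comp (hgmeas t)
    have h3 : Measurable[ℱ (t + 1)] (fun ω => θs t ω i) :=
      ((measurable_pi_apply i).comp (hθmeas t)).mono (ℱ.mono (Nat.le_succ t)) le_rfl
    exact (h1.sub h2).mul (h3.sub measurable_const)
  -- integrability of the coordinates of the stochastic gradients
  have hgint : ∀ t, t < T → ∀ i, Integrable (fun ω => gs t ω i) P := fun t ht i =>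
    integrable_coord hNtri hNsmul hNdef ((hgmeas t).mono (ℱ.le (t + 1)) le_rfl) (hgb t ht) i
  -- diameter bound
  have hdiam : ∀ ω, ∀ t < T, N (θs t ω - θ') ≤ 2 * Real.sqrt (2 * BΨ) := fun ω t ht =>
    diam_le hΘconv hNtri hNsmul hΨnonneg hΨdiff hstrong hBΨ (hinit ω) (hmem ω t ht.le) hθ'
  -- dual-norm bound for the conditional expectations
  have hgbarb : ∀ t < T, ∀ᵐ ω ∂P,
      dualNorm N (fun i => (P[fun ω' => gs t ω' i|ℱ t]) ω) ≤ Bg := fun t ht =>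
    dualNorm_condexp_le hNtri hNsmul hNdef (ℱ.le t)
      ((hgmeas t).mono (ℱ.le (t + 1)) le_rfl) hBg0 (hgb t ht)
  -- decomposition of X
  have hXsplit : ∀ t ω, X t ω =
      (smdIP (fun i => (P[fun ω' => gs t ω' i|ℱ t]) ω) (θs t ω)
        - smdIP (fun i => (P[fun ω' => gs t ω' i|ℱ t]) ω) θ')
      - (smdIP (gs t ω) (θs t ω) - smdIP (gs t ω) θ') := by
    intro t ω
    rw [hXdef]
    simp only [smdIP, ← Finset.sum_sub_distrib]
    exact Finset.sum_congr rfl fun i _ => by ring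
  -- bounded increments
  have hbdd : ∀ t < T, ∀ᵐ ω ∂P, |X t ω| ≤ c := by
    intro t ht
    filter_upwards [hgb t ht, hgbarb t ht] with ω h1 h2
    have habs : ∀ v : Fin n → ℝ, dualNorm N v ≤ Bg →
        |smdIP v (θs t ω) - smdIP v θ'| ≤ Bg * (2 * Real.sqrt (2 * BΨ)) := by
      intro v hv
      have hone := smdIP_le hNtri hNsmul hNdef v (θs t ω) θ'
      have htwo := smdIP_le hNtri hNsmul hNdef v θ' (θs t ω)
      have hrev := N_sub_rev hNtri hNsmul θ' (θs t ω)
      have hdual0 := dualNorm_nonneg hNtri hNsmul hNdef v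
      have hd := hdiam ω t ht
      have hNn := N_nonneg hNtri hNsmul (θs t ω - θ')
      rw [abs_le]
      constructor
      · nlinarith
      · nlinarith
    have ha1 := habs _ h2
    have ha2 := habs _ h1
    set D1 : ℝ := smdIP (fun i => (P[fun ω' => gs t ω' i|ℱ t]) ω) (θs t ω)
      - smdIP (fun i => (P[fun ω' => gs t ω' i|ℱ t]) ω) θ' with hD1
    set D2 : ℝ := smdIP (gs t ω) (θs t ω) - smdIP (gs t ω) θ' with hD2
    rw [hXsplit t ω, hcdef]
    rw [abs_le] at ha1 ha2 ⊢
    have hBsq : 0 ≤ Bg * (2 * Real.sqrt (2 * BΨ)) := by positivity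
    constructor
    · linarith [ha1.1, ha2.2]
    · linarith [ha1.2, ha2.1]
  -- the increments are conditionally centered
  have hcondX : ∀ t < T, P[X t|ℱ t] =ᵐ[P] 0 := by
    intro t ht
    obtain ⟨R, hR⟩ := hΘcomp.isBounded.subset_closedBall 0
    have hθbound : ∀ ω, ‖θs t ω‖ ≤ R := fun ω => by
      have := hR (hmem ω t ht.le)
      rwa [Metric.mem_closedBall, dist_zero_right] at this
    have hXe : X t = ∑ i : Fin n, (fun ω => θs t ω i - θ' i)
        * (fun ω => (P[fun ω' => gs t ω' i|ℱ t]) ω - gs t ω i) := by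
      funext ω
      rw [hXdef, Finset.sum_apply]
      exact Finset.sum_congr rfl fun i _ => by simp [Pi.mul_apply]; ring
    have hYmeas : ∀ i, StronglyMeasurable[ℱ t] (fun ω => θs t ω i - θ' i) := fun i =>
      (((measurable_pi_apply i).comp (hθmeas t)).sub measurable_const).stronglyMeasurable
    have hZint : ∀ i, Integrable (fun ω => (P[fun ω' => gs t ω' i|ℱ t]) ω - gs t ω i) P :=
      fun i => integrable_condExp.sub (hgint t ht i)
    have hYbdd : ∀ i ω, ‖θs t ω i - θ' i‖ ≤ R + ‖θ'‖ := by
      intro i ω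
      rw [Real.norm_eq_abs]
      have hb1 : |θs t ω i| ≤ R :=
        le_trans (by simpa using norm_le_pi_norm (θs t ω) i) (hθbound ω)
      have hb2 : |θ' i| ≤ ‖θ'‖ := by simpa using norm_le_pi_norm θ' i
      calc |θs t ω i - θ' i| ≤ |θs t ω i| + |θ' i| := abs_sub _ _
        _ ≤ R + ‖θ'‖ := add_le_add hb1 hb2
    have hprodint : ∀ i, Integrable ((fun ω => θs t ω i - θ' i)
        * (fun ω => (P[fun ω' => gs t ω' i|ℱ t]) ω - gs t ω i)) P := fun i =>
      Integrable.bdd_mul (hZint i)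
        ((hYmeas i).mono (ℱ.le t)).aestronglyMeasurable (Filter.Eventually.of_forall fun ω => hYbdd i ω)
    have hZcond : ∀ i, P[fun ω => (P[fun ω' => gs t ω' i|ℱ t]) ω - gs t ω i|ℱ t]
        =ᵐ[P] fun _ => (0:ℝ) := by
      intro i
      have hsubc := condExp_sub (μ := P) (m := ℱ t)
        (f := fun ω => (P[fun ω' => gs t ω' i|ℱ t]) ω) (g := fun ω => gs t ω i)
        integrable_condExp (hgint t ht i)
      have hidem : P[fun ω => (P[fun ω' => gs t ω' i|ℱ t]) ω|ℱ t]
          = fun ω => (P[fun ω' => gs t ω' i|ℱ t]) ω :=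
        condExp_of_stronglyMeasurable (ℱ.le t) stronglyMeasurable_condExp integrable_condExp
      refine hsubc.trans ?_
      rw [hidem]
      exact MeasureTheory.ae_of_all _ fun ω => by simp
    have hsumce := condExp_finsetSum (μ := P) (m := ℱ t)
      (f := fun i => (fun ω => θs t ω i - θ' i)
        * (fun ω => (P[fun ω' => gs t ω' i|ℱ t]) ω - gs t ω i))
      (s := Finset.univ) (fun i _ => hprodint i)
    have hpull : ∀ i : Fin n, P[(fun ω => θs t ω i - θ' i)
          * (fun ω => (P[fun ω' => gs t ω' i|ℱ t]) ω - gs t ω i)|ℱ t]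
        =ᵐ[P] (fun ω => θs t ω i - θ' i)
          * P[fun ω => (P[fun ω' => gs t ω' i|ℱ t]) ω - gs t ω i|ℱ t] := fun i =>
      condExp_mul_of_stronglyMeasurable_left (hYmeas i) (hprodint i) (hZint i)
    have hterm0 : ∀ᵐ ω ∂P, ∀ i : Fin n, (P[(fun ω' => θs t ω' i - θ' i)
          * (fun ω' => (P[fun ω'' => gs t ω'' i|ℱ t]) ω' - gs t ω' i)|ℱ t]) ω = 0 := by
      rw [MeasureTheory.ae_all_iff]
      intro i
      filter_upwards [hpull i, hZcond i] with ω hp hz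
      rw [hp]
      simp only [Pi.mul_apply]
      rw [hz]
      ring
    rw [hXe]
    filter_upwards [hsumce.trans (MeasureTheory.ae_of_all _ fun ω => rfl), hterm0]
      with ω hs hz
    rw [hs]
    simp only [Finset.sum_apply]
    rw [Finset.sum_eq_zero fun i _ => hz i]
    rfl
  -- the Azuma tail bound
  have htail0 := azuma_tail (P := P) (a := a) ℱ hcpos.le hlampos.le hadp T hbdd hcondX
  have hexp : (T:ℝ) * (lam ^ 2 * c ^ 2 / 2) - lam * a = -L := by
    have hT0 : (T:ℝ) ≠ 0 := hTpos.ne'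
    have hc0 : c ≠ 0 := hcpos.ne'
    have hD : (T:ℝ) * c ^ 2 ≠ 0 := by positivity
    have h1 : lam * a = 2 * L := by
      have e1 : lam * a = a ^ 2 / ((T:ℝ) * c ^ 2) := by rw [hlamdef]; ring
      rw [e1, ha2, div_eq_iff hD]
      ring
    have h2 : (T:ℝ) * (lam ^ 2 * c ^ 2 / 2) = L := by
      have e1 : lam ^ 2 = a ^ 2 / ((T:ℝ) * c ^ 2) ^ 2 := by rw [hlamdef, div_pow]
      rw [e1, ha2]
      field_simp
    linarith [h1, h2]
  have hexpL : Real.exp (-L) = δ := by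
    rw [hLdef, one_div, Real.log_inv, neg_neg, Real.exp_log hδ]
  have htail : P {ω | a ≤ ∑ t ∈ Finset.range T, X t ω} ≤ ENNReal.ofReal δ := by
    calc P {ω | a ≤ ∑ t ∈ Finset.range T, X t ω}
        ≤ ENNReal.ofReal (Real.exp ((T:ℝ) * (lam ^ 2 * c ^ 2 / 2) - lam * a)) := htail0
      _ = ENNReal.ofReal δ := by rw [hexp, hexpL]
  -- regret bound value
  have hregval : BΨ / η + T * η * Bg ^ 2 / 2 = (3/2) * (Bg * Real.sqrt (BΨ * T)) := by
    have hη2 : η ^ 2 = BΨ / (T * Bg ^ 2) := by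
      rw [hη]; exact Real.sq_sqrt (by positivity)
    have hid : BΨ = T * Bg ^ 2 * η ^ 2 := by
      rw [hη2]; field_simp
    have h2 : (T:ℝ) * Bg ^ 2 * η = Bg * Real.sqrt (BΨ * T) := by
      have e1 : (T:ℝ) * Bg ^ 2 * η
          = Real.sqrt (((T:ℝ) * Bg ^ 2) ^ 2 * (BΨ / (T * Bg ^ 2))) := by
        rw [Real.sqrt_mul (by positivity), Real.sqrt_sq (by positivity), hη]
      have e2 : ((T:ℝ) * Bg ^ 2) ^ 2 * (BΨ / (T * Bg ^ 2)) = Bg ^ 2 * (BΨ * T) := by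
        field_simp
      rw [e1, e2, Real.sqrt_mul (by positivity), Real.sqrt_sq hBgpos.le]
    have h3 : BΨ / η = T * Bg ^ 2 * η := by
      rw [hid]
      field_simp
    rw [h3, ← h2]
    ring
  -- almost sure implication: bounded martingale sum ⟹ the event
  have haegb : ∀ᵐ ω ∂P, ∀ t, t < T → dualNorm N (gs t ω) ≤ Bg := by
    rw [MeasureTheory.ae_all_iff]
    intro t
    rcases lt_or_ge t T with ht | ht
    · exact (hgb t ht).mono fun ω h _ => h
    · exact MeasureTheory.ae_of_all _ fun ω ht' => absurd ht' (by omega)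
  have haesub : ∀ᵐ ω ∂P, ∀ t, t < T → ∀ y ∈ Θ,
      f t (θs t ω) + ∑ i, (P[fun ω' => gs t ω' i|ℱ t]) ω * (y i - θs t ω i) ≤ f t y := by
    rw [MeasureTheory.ae_all_iff]
    intro t
    rcases lt_or_ge t T with ht | ht
    · exact (hsub t ht).mono fun ω h _ => h
    · exact MeasureTheory.ae_of_all _ fun ω ht' => absurd ht' (by omega)
  have himpl : ∀ᵐ ω ∂P, (∑ t ∈ Finset.range T, X t ω ≤ a → ω ∈ Sset) := by
    filter_upwards [haegb, haesub] with ω h1 h2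
    intro hXle
    -- regret bound at ω
    have hreg := regret_sum hΘconv hNtri hNsmul hNdef hΨnonneg hΨdiff hstrong hBΨ
      hηpos hBg0 (θ := fun t => θs t ω) (θt := fun t => θtil t ω)
      (g := fun t => gs t ω) (hinit ω) (fun t ht => h1 t ht)
      (fun t ht => hmirror t ht ω) (fun t ht => hproj t ht ω) hθ'
    -- subgradient bound at ω
    have hsubl : ∀ t < T, f t (θs t ω) - f t θ'
        ≤ smdIP (fun i => (P[fun ω' => gs t ω' i|ℱ t]) ω) (θs t ω)
          - smdIP (fun i => (P[fun ω' => gs t ω' i|ℱ t]) ω) θ' := by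
      intro t ht
      have := h2 t ht θ' hθ'
      have hp := smdIP_pair (fun i => (P[fun ω' => gs t ω' i|ℱ t]) ω) θ' (θs t ω)
      rw [hp] at this
      linarith
    have hsum1 : ∑ t ∈ Finset.range T, (f t (θs t ω) - f t θ')
        ≤ ∑ t ∈ Finset.range T, ((smdIP (gs t ω) (θs t ω) - smdIP (gs t ω) θ') + X t ω) := by
      refine Finset.sum_le_sum fun t ht => ?_
      have h3 := hsubl t (Finset.mem_range.mp ht)
      have h4 := hXsplit t ω
      linarith
    have hsum2 : ∑ t ∈ Finset.range T, ((smdIP (gs t ω) (θs t ω) - smdIP (gs t ω) θ') + X t ω)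
        = (∑ t ∈ Finset.range T, (smdIP (gs t ω) (θs t ω) - smdIP (gs t ω) θ'))
          + ∑ t ∈ Finset.range T, X t ω := Finset.sum_add_distrib
    have hkey : ∑ t ∈ Finset.range T, (f t (θs t ω) - f t θ')
        ≤ (3/2) * (Bg * Real.sqrt (BΨ * T)) + a := by
      rw [← hregval]
      calc ∑ t ∈ Finset.range T, (f t (θs t ω) - f t θ')
          ≤ (∑ t ∈ Finset.range T, (smdIP (gs t ω) (θs t ω) - smdIP (gs t ω) θ'))
            + ∑ t ∈ Finset.range T, X t ω := by rw [← hsum2]; exact hsum1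
        _ ≤ (BΨ / η + T * η * Bg ^ 2 / 2) + a := add_le_add hreg hXle
    -- final numeric computation
    have e1 : Real.sqrt (2 * BΨ) * Real.sqrt (2 * T * L) = 2 * Real.sqrt (BΨ * T * L) := by
      rw [← Real.sqrt_mul (by positivity)]
      rw [show (2 * BΨ) * (2 * (T:ℝ) * L) = 2 ^ 2 * (BΨ * T * L) by ring]
      rw [Real.sqrt_mul (by positivity), Real.sqrt_sq (by norm_num)]
    have e2 : (T:ℝ) * Real.sqrt (2 * BΨ * (1 + 16 * L) / T)
        = Real.sqrt (2 * BΨ * T * (1 + 16 * L)) := by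
      have e21 : (T:ℝ) * Real.sqrt (2 * BΨ * (1 + 16 * L) / T)
          = Real.sqrt ((T:ℝ) ^ 2 * (2 * BΨ * (1 + 16 * L) / T)) := by
        rw [Real.sqrt_mul (by positivity), Real.sqrt_sq hTpos.le]
      rw [e21]
      congr 1
      field_simp
    set u : ℝ := Real.sqrt (BΨ * T) with hu
    set v : ℝ := Real.sqrt (BΨ * T * L) with hv
    set w : ℝ := Real.sqrt (2 * BΨ * T * (1 + 16 * L)) with hw
    have hu2 : u ^ 2 = BΨ * T := Real.sq_sqrt (by positivity)
    have hv2 : v ^ 2 = BΨ * T * L := Real.sq_sqrt (by positivity)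
    have hw2 : w ^ 2 = 2 * BΨ * T * (1 + 16 * L) := Real.sq_sqrt (by positivity)
    have hu0 : 0 ≤ u := Real.sqrt_nonneg _
    have hv0 : 0 ≤ v := Real.sqrt_nonneg _
    have hw0 : 0 ≤ w := Real.sqrt_nonneg _
    have heqw : w ^ 2 = 2 * u ^ 2 + 32 * v ^ 2 := by
      rw [hu2, hv2, hw2]; ring
    have hnum : (3/2) * u + 8 * v ≤ 2 * w := smd_num_ineq hu0 hv0 hw0 heqw
    have hfin : (3/2) * (Bg * u) + a ≤ (T:ℝ) * (2 * Bg * Real.sqrt (2 * BΨ * (1 + 16 * L) / T)) := by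
      have ha' : a = 8 * Bg * v := by
        rw [hadef, hcdef]
        calc 4 * Bg * Real.sqrt (2 * BΨ) * Real.sqrt (2 * T * L)
            = 4 * Bg * (Real.sqrt (2 * BΨ) * Real.sqrt (2 * T * L)) := by ring
          _ = 4 * Bg * (2 * v) := by rw [e1]
          _ = 8 * Bg * v := by ring
      have hrhs : (T:ℝ) * (2 * Bg * Real.sqrt (2 * BΨ * (1 + 16 * L) / T)) = 2 * Bg * w := by
        calc (T:ℝ) * (2 * Bg * Real.sqrt (2 * BΨ * (1 + 16 * L) / T))
            = 2 * Bg * ((T:ℝ) * Real.sqrt (2 * BΨ * (1 + 16 * L) / T)) := by ring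
          _ = 2 * Bg * w := by rw [e2]
      rw [ha', hrhs]
      exact smd_num_ineq2 hBg0 hnum
    -- conclude membership
    rw [hSset]
    simp only [Set.mem_setOf_eq]
    have hdiff : (1 / (T:ℝ)) * ∑ t ∈ Finset.range T, f t (θs t ω)
        - (1 / (T:ℝ)) * ∑ t ∈ Finset.range T, f t θ'
        = (1 / (T:ℝ)) * ∑ t ∈ Finset.range T, (f t (θs t ω) - f t θ') := by
      rw [Finset.sum_sub_distrib]
      ring
    rw [hdiff]
    have hLe : ∑ t ∈ Finset.range T, (f t (θs t ω) - f t θ')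
        ≤ (T:ℝ) * (2 * Bg * Real.sqrt (2 * BΨ * (1 + 16 * L) / T)) := le_trans hkey hfin
    calc (1 / (T:ℝ)) * ∑ t ∈ Finset.range T, (f t (θs t ω) - f t θ')
        ≤ (1 / (T:ℝ)) * ((T:ℝ) * (2 * Bg * Real.sqrt (2 * BΨ * (1 + 16 * L) / T))) :=
          mul_le_mul_of_nonneg_left hLe (by positivity)
      _ = 2 * Bg * Real.sqrt (2 * BΨ * (1 + 16 * L) / T) := by
          field_simp
    -- note: `L` is by definition `Real.log (1 / δ)`
  -- combine everything
  have hincl : Ssetᶜ ⊆ {ω | a ≤ ∑ t ∈ Finset.range T, X t ω}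
      ∪ {ω | ¬(∑ t ∈ Finset.range T, X t ω ≤ a → ω ∈ Sset)} := by
    intro ω hω
    by_cases himp : (∑ t ∈ Finset.range T, X t ω ≤ a → ω ∈ Sset)
    · left
      simp only [Set.mem_setOf_eq]
      by_contra hlt
      push_neg at hlt
      exact hω (himp hlt.le)
    · right
      exact himp
  have hnull : P {ω | ¬(∑ t ∈ Finset.range T, X t ω ≤ a → ω ∈ Sset)} = 0 :=
    MeasureTheory.ae_iff.mp himpl
  have hcompl : P Ssetᶜ ≤ ENNReal.ofReal δ := by
    calc P Ssetᶜ ≤ P ({ω | a ≤ ∑ t ∈ Finset.range T, X t ω}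
          ∪ {ω | ¬(∑ t ∈ Finset.range T, X t ω ≤ a → ω ∈ Sset)}) := measure_mono hincl
      _ ≤ P {ω | a ≤ ∑ t ∈ Finset.range T, X t ω}
          + P {ω | ¬(∑ t ∈ Finset.range T, X t ω ≤ a → ω ∈ Sset)} := measure_union_le _ _
      _ ≤ ENNReal.ofReal δ + 0 := add_le_add htail (le_of_eq hnull)
      _ = ENNReal.ofReal δ := add_zero _
  exact final_prob P Sset hδ.le hcompl
end

section
/- (Stochastic swap-regret bound.) Let Λ := Δ^{m̃}, ℳ the set of left-stochastic m̃×m̃ matrices, and f₁,…,f_T : Λ → ℝ concave. Starting from M^(1) with all entries 1/m̃ and with step size η := √(m̃ ln m̃/(T B_ĝ²)), perform T iterations: λ^(t) := a stationary distribution of M^(t) (M^(t) λ^(t) = λ^(t)); A^(t) := ĝ^(t) (λ^(t))ᵀ, where ĝ^(t) is an adapted random vector whose conditional expectation given the past is a supergradient of f_t at λ^(t), with ‖ĝ^(t)‖_∞ ≤ B_ĝ almost surely; M̃^(t+1) = M^(t) ⊙ exp(η A^(t)) element-wise; and M^(t+1) is M̃^(t+1) with each column normalized to sum to 1. Then for every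 M* ∈ ℳ, with probability at least 1−δ over the draws of the stochastic supergradients: (1/T) Σ_{t=1}^T f_t(M* λ^(t)) − (1/T) Σ_{t=1}^T f_t(λ^(t)) ≤ 2 B_ĝ √(2 (m̃ ln m̃)(1 + 16 ln(1/δ)) / T). -/
open MeasureTheory

lemma SSRB.exp_le_one_add_add_sq {x : ℝ} (hx : |x| ≤ 1) : Real.exp x ≤ 1 + x + x ^ 2 := by
  have h := Real.exp_bound hx (n := 3) (by norm_num)
  have hs : ∑ i ∈ Finset.range 3, x ^ i / (Nat.factorial i) = 1 + x + x ^ 2 / 2 := by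
    simp [Finset.sum_range_succ, Nat.factorial]
  rw [hs] at h
  norm_num [Nat.factorial] at h
  have habs : |x| ^ 3 ≤ x ^ 2 := by
    have : |x| ^ 3 ≤ |x| ^ 2 := pow_le_pow_of_le_one (abs_nonneg x) hx (by norm_num)
    simpa [sq_abs] using this
  have := abs_le.1 h
  nlinarith [this.2]

lemma SSRB.mw_bound {m T : ℕ} (hm : 0 < m) (B η : ℝ) (hB : 0 ≤ B) (hη : 0 ≤ η) (hηB : η * B ≤ 1)
    (g lam : ℕ → Fin m → ℝ) (M : ℕ → Fin m → Fin m → ℝ) (M' : Fin m → Fin m → ℝ)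
    (hM' : ∀ j, (fun i => M' i j) ∈ stdSimplex ℝ (Fin m))
    (hinit : ∀ i j, M 0 i j = 1 / m)
    (hstat : ∀ t < T, lam t ∈ stdSimplex ℝ (Fin m) ∧ ∀ i, ∑ j, M t i j * lam t j = lam t i)
    (hgB : ∀ t < T, ∀ i, |g t i| ≤ B)
    (hupd : ∀ t < T, ∀ i j, M (t+1) i j = (M t i j * Real.exp (η * (g t i * lam t j)))
      / ∑ k, M t k j * Real.exp (η * (g t k * lam t j))) :
    ∑ t ∈ Finset.range T, (η * ((∑ i, g t i * (∑ j, M' i j * lam t j)) - ∑ i, g t i * lam t i))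
      ≤ m * Real.log m + η ^ 2 * B ^ 2 * T := by
  -- invariant: positivity and column sums
  have hinv : ∀ t ≤ T, ∀ j, (∀ i, 0 < M t i j) ∧ (∑ i, M t i j) = 1 := by
    intro t
    induction t with
    | zero =>
      intro _ j
      constructor
      · intro i; rw [hinit]; positivity
      · simp only [hinit]
        rw [Finset.sum_const]
        simp [Finset.card_univ]
        field_simp
    | succ t ih =>
      intro ht j
      have htT : t < T := Nat.lt_of_succ_le ht
      obtain ⟨hpos, hsum⟩ := ih (le_of_lt htT) j
      have hZpos : 0 < ∑ k, M t k j * Real.exp (η * (g t k * lam t j)) := by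
        have : Nonempty (Fin m) := ⟨⟨0, hm⟩⟩
        exact Finset.sum_pos (fun k _ => mul_pos (hpos k) (Real.exp_pos _)) Finset.univ_nonempty
      constructor
      · intro i
        rw [hupd t htT]
        exact div_pos (mul_pos (hpos i) (Real.exp_pos _)) hZpos
      · simp only [hupd t htT]
        rw [← Finset.sum_div]
        exact div_self (ne_of_gt hZpos)
  classical
  have hMpos : ∀ t ≤ T, ∀ i j, 0 < M t i j := fun t ht i j => (hinv t ht j).1 i
  have hMle1 : ∀ t ≤ T, ∀ i j, M t i j ≤ 1 := by
    intro t ht i j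
    calc M t i j ≤ ∑ k, M t k j :=
      Finset.single_le_sum (fun k _ => (hMpos t ht k j).le) (Finset.mem_univ i)
    _ = 1 := (hinv t ht j).2
  set Φ : ℕ → ℝ := fun t => ∑ j, ∑ i, M' i j * Real.log (M t i j) with hΦ
  have hstep : ∀ t < T, η * ((∑ i, g t i * (∑ j, M' i j * lam t j)) - ∑ i, g t i * lam t i)
      ≤ Φ (t+1) - Φ t + η ^ 2 * B ^ 2 := by
    intro t htT
    obtain ⟨hlam, hstat'⟩ := hstat t htT
    have hlam0 : ∀ j, 0 ≤ lam t j := hlam.1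
    have hlamsum : ∑ j, lam t j = 1 := hlam.2
    have hlam1 : ∀ j, lam t j ≤ 1 := by
      intro j
      calc lam t j ≤ ∑ k, lam t k :=
        Finset.single_le_sum (fun k _ => hlam0 k) (Finset.mem_univ j)
      _ = 1 := hlamsum
    have hcol : ∀ j,
        η * lam t j * (∑ i, M' i j * g t i) - η * lam t j * (∑ i, M t i j * g t i)
          - η ^ 2 * B ^ 2 * (lam t j) ^ 2
        ≤ (∑ i, M' i j * Real.log (M (t+1) i j)) - ∑ i, M' i j * Real.log (M t i j) := by
      intro j
      set Z : ℝ := ∑ k, M t k j * Real.exp (η * (g t k * lam t j)) with hZ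
      have hZpos : 0 < Z := by
        have : Nonempty (Fin m) := ⟨⟨0, hm⟩⟩
        exact Finset.sum_pos
          (fun k _ => mul_pos (hMpos t htT.le k j) (Real.exp_pos _)) Finset.univ_nonempty
      have hx : ∀ k, |η * (g t k * lam t j)| ≤ 1 := by
        intro k
        rw [abs_mul, abs_mul, abs_of_nonneg hη, abs_of_nonneg (hlam0 j)]
        calc η * (|g t k| * lam t j) ≤ η * (B * 1) := by
              apply mul_le_mul_of_nonneg_left _ hη
              exact mul_le_mul (hgB t htT k) (hlam1 j) (hlam0 j) hB
        _ ≤ 1 := by simpa using hηB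
      have hZle : Z ≤ 1 + η * lam t j * (∑ k, M t k j * g t k) + η ^ 2 * B ^ 2 * (lam t j) ^ 2 := by
        have hterm : ∀ k, M t k j * Real.exp (η * (g t k * lam t j))
            ≤ M t k j * (1 + η * (g t k * lam t j) + η ^ 2 * B ^ 2 * (lam t j) ^ 2) := by
          intro k
          apply mul_le_mul_of_nonneg_left _ (hMpos t htT.le k j).le
          have h1 := SSRB.exp_le_one_add_add_sq (hx k)
          have h2 : (η * (g t k * lam t j)) ^ 2 ≤ η ^ 2 * B ^ 2 * (lam t j) ^ 2 := by
            have habs : |η * (g t k * lam t j)| ≤ η * B * lam t j := by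
              have e : |η * (g t k * lam t j)| = η * |g t k| * lam t j := by
                rw [abs_mul, abs_mul, abs_of_nonneg hη, abs_of_nonneg (hlam0 j)]; ring
              rw [e]
              have h0 : 0 ≤ η * lam t j := mul_nonneg hη (hlam0 j)
              nlinarith [hgB t htT k]
            nlinarith [sq_abs (η * (g t k * lam t j)), abs_nonneg (η * (g t k * lam t j)),
              mul_nonneg (mul_nonneg hη hB) (hlam0 j)]
          linarith
        calc Z ≤ ∑ k, M t k j * (1 + η * (g t k * lam t j) + η ^ 2 * B ^ 2 * (lam t j) ^ 2) :=
              Finset.sum_le_sum (fun k _ => hterm k)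
        _ = (∑ k, M t k j) + η * lam t j * (∑ k, M t k j * g t k)
              + (∑ k, M t k j) * (η ^ 2 * B ^ 2 * (lam t j) ^ 2) := by
              rw [Finset.mul_sum, Finset.sum_mul, ← Finset.sum_add_distrib,
                ← Finset.sum_add_distrib]
              apply Finset.sum_congr rfl
              intro k _; ring
        _ = 1 + η * lam t j * (∑ k, M t k j * g t k) + η ^ 2 * B ^ 2 * (lam t j) ^ 2 := by
              rw [(hinv t htT.le j).2]; ring
      have hlogZ : Real.log Z ≤ η * lam t j * (∑ k, M t k j * g t k)
          + η ^ 2 * B ^ 2 * (lam t j) ^ 2 := by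
        have := Real.log_le_sub_one_of_pos hZpos
        linarith
      have hlog : ∀ i, Real.log (M (t+1) i j)
          = Real.log (M t i j) + η * (g t i * lam t j) - Real.log Z := by
        intro i
        rw [hupd t htT i j, ← hZ, Real.log_div (mul_pos (hMpos t htT.le i j) (Real.exp_pos _)).ne' hZpos.ne',
          Real.log_mul (ne_of_gt (hMpos t htT.le i j)) (Real.exp_ne_zero _), Real.log_exp]
      have hsum1 : ∑ i, M' i j = 1 := (hM' j).2
      have hM'0 : ∀ i, 0 ≤ M' i j := fun i => (hM' j).1 i
      have hexpand : (∑ i, M' i j * Real.log (M (t+1) i j))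
          = (∑ i, M' i j * Real.log (M t i j)) + η * lam t j * (∑ i, M' i j * g t i)
            - Real.log Z := by
        calc (∑ i, M' i j * Real.log (M (t+1) i j))
            = ∑ i, (M' i j * Real.log (M t i j) + M' i j * (η * (g t i * lam t j))
              - M' i j * Real.log Z) := by
              apply Finset.sum_congr rfl
              intro i _; rw [hlog i]; ring
        _ = (∑ i, M' i j * Real.log (M t i j)) + η * lam t j * (∑ i, M' i j * g t i)
              - (∑ i, M' i j) * Real.log Z := by
              rw [Finset.sum_sub_distrib, Finset.sum_add_distrib, ← Finset.sum_mul,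
                Finset.mul_sum]
              congr 1
              congr 1
              apply Finset.sum_congr rfl
              intro i _; ring
        _ = _ := by rw [hsum1]; ring
      rw [hexpand]
      linarith
    -- sum over columns
    have hsums := Finset.sum_le_sum (fun j (_ : j ∈ (Finset.univ : Finset (Fin m))) => hcol j)
    have e1 : ∑ j, (η * lam t j * (∑ i, M' i j * g t i) - η * lam t j * (∑ i, M t i j * g t i)
          - η ^ 2 * B ^ 2 * (lam t j) ^ 2)
        = η * (∑ i, g t i * (∑ j, M' i j * lam t j)) - η * (∑ i, g t i * lam t i)
          - η ^ 2 * B ^ 2 * ∑ j, (lam t j) ^ 2 := by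
      rw [Finset.sum_sub_distrib, Finset.sum_sub_distrib, ← Finset.mul_sum]
      have eA : ∑ j, η * lam t j * (∑ i, M' i j * g t i)
          = η * (∑ i, g t i * (∑ j, M' i j * lam t j)) := by
        calc ∑ j, η * lam t j * (∑ i, M' i j * g t i)
            = ∑ j, ∑ i, η * lam t j * (M' i j * g t i) := by
              apply Finset.sum_congr rfl; intro j _; rw [Finset.mul_sum]
        _ = ∑ i, ∑ j, η * lam t j * (M' i j * g t i) := Finset.sum_comm
        _ = η * (∑ i, g t i * (∑ j, M' i j * lam t j)) := by
              rw [Finset.mul_sum]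
              apply Finset.sum_congr rfl; intro i _
              rw [Finset.mul_sum, Finset.mul_sum]
              apply Finset.sum_congr rfl; intro j _; ring
      have eB : ∑ j, η * lam t j * (∑ i, M t i j * g t i)
          = η * (∑ i, g t i * lam t i) := by
        calc ∑ j, η * lam t j * (∑ i, M t i j * g t i)
            = ∑ j, ∑ i, η * lam t j * (M t i j * g t i) := by
              apply Finset.sum_congr rfl; intro j _; rw [Finset.mul_sum]
        _ = ∑ i, ∑ j, η * lam t j * (M t i j * g t i) := Finset.sum_comm
        _ = ∑ i, η * (g t i * lam t i) := by
              apply Finset.sum_congr rfl; intro i _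
              rw [← hstat' i, Finset.mul_sum, Finset.mul_sum]
              apply Finset.sum_congr rfl; intro j _; ring
        _ = η * (∑ i, g t i * lam t i) := by rw [Finset.mul_sum]
      rw [eA, eB]
    have e2 : ∑ j, ((∑ i, M' i j * Real.log (M (t+1) i j))
          - ∑ i, M' i j * Real.log (M t i j)) = Φ (t+1) - Φ t := by
      rw [Finset.sum_sub_distrib]
    have hsq : ∑ j, (lam t j) ^ 2 ≤ 1 := by
      calc ∑ j, (lam t j) ^ 2 ≤ ∑ j, lam t j := by
            apply Finset.sum_le_sum; intro j _
            nlinarith [hlam0 j, hlam1 j]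
      _ = 1 := hlamsum
    rw [e1, e2] at hsums
    have h0 : 0 ≤ η ^ 2 * B ^ 2 := by positivity
    nlinarith [hsums, hsq]
  -- telescope
  have htel : ∑ t ∈ Finset.range T, (Φ (t+1) - Φ t) = Φ T - Φ 0 := Finset.sum_range_sub Φ T
  have hΦ0 : Φ 0 = -(m * Real.log m) := by
    have : ∀ j : Fin m, ∑ i, M' i j * Real.log (M 0 i j) = -Real.log m := by
      intro j
      have : ∀ i : Fin m, M' i j * Real.log (M 0 i j) = M' i j * (-Real.log m) := by
        intro i
        rw [hinit i j, one_div, Real.log_inv]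
      rw [Finset.sum_congr rfl (fun i _ => this i), ← Finset.sum_mul, (hM' j).2, one_mul]
    rw [hΦ]
    simp only [this]
    rw [Finset.sum_const, Finset.card_univ, Fintype.card_fin]
    ring
  have hΦT : Φ T ≤ 0 := by
    rw [hΦ]
    apply Finset.sum_nonpos; intro j _
    apply Finset.sum_nonpos; intro i _
    exact mul_nonpos_of_nonneg_of_nonpos ((hM' j).1 i)
      (Real.log_nonpos (hMpos T le_rfl i j).le (hMle1 T le_rfl i j))
  calc ∑ t ∈ Finset.range T,
        (η * ((∑ i, g t i * (∑ j, M' i j * lam t j)) - ∑ i, g t i * lam t i))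
      ≤ ∑ t ∈ Finset.range T, (Φ (t+1) - Φ t + η ^ 2 * B ^ 2) := by
        apply Finset.sum_le_sum; intro t ht
        exact hstep t (Finset.mem_range.mp ht)
  _ = (Φ T - Φ 0) + η ^ 2 * B ^ 2 * T := by
        rw [Finset.sum_add_distrib, htel, Finset.sum_const, Finset.card_range]
        ring
  _ ≤ m * Real.log m + η ^ 2 * B ^ 2 * T := by
        rw [hΦ0]
        have : Φ T - -(m * Real.log m) ≤ m * Real.log m := by linarith [hΦT]
        linarith


lemma SSRB.integrable_of_bound {Ω : Type*} {m0 : MeasurableSpace Ω} (P : Measure Ω)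
    [IsProbabilityMeasure P] {f : Ω → ℝ} (hf : AEStronglyMeasurable f P) (C : ℝ)
    (h : ∀ᵐ ω ∂P, |f ω| ≤ C) : Integrable f P :=
  (integrable_const C).mono' hf (by filter_upwards [h] with ω hω; simpa [Real.norm_eq_abs] using hω)

lemma SSRB.azuma {Ω : Type*} {m0 : MeasurableSpace Ω} (P : Measure Ω) [IsProbabilityMeasure P]
    (ℱ : Filtration ℕ m0) (Z : ℕ → Ω → ℝ) (T : ℕ) (c s ε : ℝ) (hc : 0 < c) (hs : 0 ≤ s)
    (hsc : s * c ≤ 1) (hε : 0 ≤ ε)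
    (hmeas : ∀ t < T, Measurable[ℱ (t+1)] (Z t))
    (hbdd : ∀ t < T, ∀ᵐ ω ∂P, |Z t ω| ≤ c)
    (hcond : ∀ t < T, P[Z t | ℱ t] =ᵐ[P] 0) :
    P {ω | ε ≤ ∑ t ∈ Finset.range T, Z t ω}
      ≤ ENNReal.ofReal (Real.exp ((T : ℝ) * (s ^ 2 * c ^ 2) - s * ε)) := by
  set S : ℕ → Ω → ℝ := fun n ω => ∑ t ∈ Finset.range n, Z t ω with hS
  have hZmeas0 : ∀ t < T, Measurable (Z t) := fun t ht => (hmeas t ht).mono (ℱ.le _) le_rfl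
  have hSmeas : ∀ n ≤ T, Measurable[ℱ n] (S n) := by
    intro n hn
    apply Finset.measurable_sum
    intro t ht
    have ht' : t + 1 ≤ n := Finset.mem_range.mp ht
    exact (hmeas t (lt_of_lt_of_le (Finset.mem_range.mp ht) hn)).mono (ℱ.mono ht') le_rfl
  have hSbdd : ∀ n ≤ T, ∀ᵐ ω ∂P, |S n ω| ≤ n * c := by
    intro n hn
    have hbdd' : ∀ᵐ ω ∂P, ∀ t, t < T → |Z t ω| ≤ c := by
      rw [ae_all_iff]
      intro t
      by_cases h : t < T
      · filter_upwards [hbdd t h] with ω hω _; exact hω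
      · filter_upwards with ω h'; exact absurd h' h
    filter_upwards [hbdd'] with ω hω
    calc |S n ω| ≤ ∑ t ∈ Finset.range n, |Z t ω| := Finset.abs_sum_le_sum_abs _ _
    _ ≤ ∑ _t ∈ Finset.range n, c :=
        Finset.sum_le_sum (fun t ht => hω t (lt_of_lt_of_le (Finset.mem_range.mp ht) hn))
    _ = n * c := by rw [Finset.sum_const, Finset.card_range, nsmul_eq_mul]
  have hZint : ∀ t < T, Integrable (Z t) P := fun t ht =>
    SSRB.integrable_of_bound P (hZmeas0 t ht).aestronglyMeasurable c (hbdd t ht)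
  have hmgf : ∀ n, n ≤ T → ∫ ω, Real.exp (s * S n ω) ∂P ≤ (1 + s ^ 2 * c ^ 2) ^ n := by
    intro n
    induction n with
    | zero =>
      intro _
      simp [hS]
    | succ n ih =>
      intro hn1
      have hn : n < T := Nat.lt_of_succ_le hn1
      set F : Ω → ℝ := fun ω => Real.exp (s * S n ω) with hF
      set G : Ω → ℝ := fun ω => Real.exp (s * Z n ω) with hG
      have hsplit : (fun ω => Real.exp (s * S (n+1) ω)) = F * G := by
        funext ω
        simp only [hF, hG, hS, Pi.mul_apply, Finset.sum_range_succ]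
        rw [← Real.exp_add]
        ring_nf
      have hFm : StronglyMeasurable[ℱ n] F :=
        (Real.measurable_exp.comp ((hSmeas n hn.le).const_mul s)).stronglyMeasurable
      have hFb : ∀ᵐ ω ∂P, ‖F ω‖ ≤ Real.exp (s * (n * c)) := by
        filter_upwards [hSbdd n hn.le] with ω hω
        rw [Real.norm_eq_abs, abs_of_pos (Real.exp_pos _)]
        apply Real.exp_le_exp.mpr
        have := (abs_le.mp hω).2
        nlinarith
      have hGb : ∀ᵐ ω ∂P, |G ω| ≤ Real.exp (s * c) := by
        filter_upwards [hbdd n hn] with ω hω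
        rw [abs_of_pos (Real.exp_pos _)]
        apply Real.exp_le_exp.mpr
        have := (abs_le.mp hω).2
        nlinarith
      have hGmeas : Measurable G := Real.measurable_exp.comp ((hZmeas0 n hn).const_mul s)
      have hGint : Integrable G P :=
        SSRB.integrable_of_bound P hGmeas.aestronglyMeasurable _ hGb
      have hFmeas : Measurable F :=
        Real.measurable_exp.comp (((hSmeas n hn.le).mono (ℱ.le n) le_rfl).const_mul s)
      have hFint : Integrable F P := by
        apply SSRB.integrable_of_bound P hFmeas.aestronglyMeasurable (Real.exp (s * (n * c)))
        filter_upwards [hFb] with ω hω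
        rwa [Real.norm_eq_abs] at hω
      have hFGint : Integrable (F * G) P := by
        apply SSRB.integrable_of_bound P (hFmeas.mul hGmeas).aestronglyMeasurable
          (Real.exp (s * (n * c)) * Real.exp (s * c))
        filter_upwards [hFb, hGb] with ω h1 h2
        rw [Real.norm_eq_abs] at h1
        simpa [Pi.mul_apply, abs_mul] using
          mul_le_mul h1 h2 (abs_nonneg _) (Real.exp_pos _).le
      have pull : P[F * G | ℱ n] =ᵐ[P] F * P[G | ℱ n] :=
        condExp_stronglyMeasurable_mul_of_bound (ℱ.le n) hFm hGint _ hFb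
      -- conditional mgf bound
      have hcondG : P[G | ℱ n] ≤ᵐ[P] fun _ => 1 + s ^ 2 * c ^ 2 := by
        set H : Ω → ℝ := fun ω => (1 + s ^ 2 * c ^ 2) + s * Z n ω with hH
        have hHint : Integrable H P := (integrable_const _).add ((hZint n hn).const_mul s)
        have hptwise : G ≤ᵐ[P] H := by
          filter_upwards [hbdd n hn] with ω hω
          have habs : |s * Z n ω| ≤ 1 := by
            rw [abs_mul, abs_of_nonneg hs]
            calc s * |Z n ω| ≤ s * c := by nlinarith
            _ ≤ 1 := hsc
          have h1 := SSRB.exp_le_one_add_add_sq habs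
          have h2 : (s * Z n ω) ^ 2 ≤ s ^ 2 * c ^ 2 := by
            have h3 := abs_le.mp hω
            have hZ2 : Z n ω ^ 2 ≤ c ^ 2 := sq_le_sq' h3.1 h3.2
            nlinarith [sq_nonneg s, hZ2]
          simp only [hG, hH]
          calc Real.exp (s * Z n ω) ≤ 1 + s * Z n ω + (s * Z n ω) ^ 2 := h1
          _ ≤ (1 + s ^ 2 * c ^ 2) + s * Z n ω := by linarith
        have hmono : P[G | ℱ n] ≤ᵐ[P] P[H | ℱ n] := condExp_mono hGint hHint hptwise
        have hcondH : P[H | ℱ n] =ᵐ[P] fun _ => 1 + s ^ 2 * c ^ 2 := by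
          have e1 : P[H | ℱ n] =ᵐ[P]
              P[(fun _ => (1 + s ^ 2 * c ^ 2 : ℝ)) | ℱ n] + P[(s • Z n) | ℱ n] := by
            have : H = (fun _ => (1 + s ^ 2 * c ^ 2 : ℝ)) + s • Z n := by
              funext ω; simp [hH]
            rw [this]
            exact condExp_add (integrable_const _) ((hZint n hn).smul s) (ℱ n)
          have e2 : P[(s • Z n) | ℱ n] =ᵐ[P] s • P[Z n | ℱ n] := condExp_smul s (Z n) (ℱ n)
          have e3 : s • P[Z n | ℱ n] =ᵐ[P] (fun _ => (0:ℝ)) := by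
            filter_upwards [hcond n hn] with ω hω
            simp [hω]
          filter_upwards [e1, e2, e3] with ω h1 h2 h3
          rw [h1]
          simp only [Pi.add_apply] at *
          rw [h2, h3, condExp_const (ℱ.le n)]
          simp
        filter_upwards [hmono, hcondH] with ω h1 h2
        rw [← h2]; exact h1
      have key : ∫ ω, Real.exp (s * S (n+1) ω) ∂P ≤ (1 + s ^ 2 * c ^ 2) * ∫ ω, F ω ∂P := by
        rw [hsplit]
        calc ∫ ω, (F * G) ω ∂P = ∫ ω, (P[F * G | ℱ n]) ω ∂P :=
              (integral_condExp (ℱ.le n)).symm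
        _ = ∫ ω, (F * P[G | ℱ n]) ω ∂P := integral_congr_ae pull
        _ ≤ ∫ ω, F ω * (1 + s ^ 2 * c ^ 2) ∂P := by
            apply integral_mono_ae
            · exact integrable_condExp.congr pull
            · exact hFint.mul_const _
            · filter_upwards [hcondG] with ω hω
              simp only [Pi.mul_apply]
              exact mul_le_mul_of_nonneg_left hω (Real.exp_pos _).le
        _ = (1 + s ^ 2 * c ^ 2) * ∫ ω, F ω ∂P := by
            rw [integral_mul_const]; ring
      calc ∫ ω, Real.exp (s * S (n+1) ω) ∂P ≤ (1 + s ^ 2 * c ^ 2) * ∫ ω, F ω ∂P := key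
      _ ≤ (1 + s ^ 2 * c ^ 2) * (1 + s ^ 2 * c ^ 2) ^ n := by
          apply mul_le_mul_of_nonneg_left (ih hn.le)
          positivity
      _ = (1 + s ^ 2 * c ^ 2) ^ (n + 1) := by ring
  -- Markov step
  have hSTmeas : Measurable (S T) := (hSmeas T le_rfl).mono (ℱ.le T) le_rfl
  have hexpint : Integrable (fun ω => Real.exp (s * S T ω)) P := by
    have hme : Measurable fun ω => Real.exp (s * S T ω) :=
      Real.measurable_exp.comp (hSTmeas.const_mul s)
    apply SSRB.integrable_of_bound P hme.aestronglyMeasurable (Real.exp (s * (T * c)))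
    filter_upwards [hSbdd T le_rfl] with ω hω
    rw [abs_of_pos (Real.exp_pos _)]
    apply Real.exp_le_exp.mpr
    have := (abs_le.mp hω).2
    nlinarith
  have hsub : {ω | ε ≤ S T ω} ⊆ {ω | Real.exp (s * ε) ≤ Real.exp (s * S T ω)} := by
    intro ω hω
    simp only [Set.mem_setOf_eq] at *
    exact Real.exp_le_exp.mpr (mul_le_mul_of_nonneg_left hω hs)
  have markov := mul_meas_ge_le_integral_of_nonneg
    (ae_of_all P (fun ω => (Real.exp_pos (s * S T ω)).le)) hexpint (Real.exp (s * ε))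
  have hbound : ∫ ω, Real.exp (s * S T ω) ∂P ≤ Real.exp ((T : ℝ) * (s ^ 2 * c ^ 2)) := by
    calc ∫ ω, Real.exp (s * S T ω) ∂P ≤ (1 + s ^ 2 * c ^ 2) ^ T := hmgf T le_rfl
    _ ≤ (Real.exp (s ^ 2 * c ^ 2)) ^ T := by
        apply pow_le_pow_left₀ (by positivity)
        exact Real.add_one_le_exp _ |>.trans_eq' (by ring)
    _ = Real.exp ((T : ℝ) * (s ^ 2 * c ^ 2)) := by
        rw [← Real.exp_nat_mul]
  have hPB : (P {ω | Real.exp (s * ε) ≤ Real.exp (s * S T ω)}).toReal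
      ≤ Real.exp ((T : ℝ) * (s ^ 2 * c ^ 2) - s * ε) := by
    have hpos : 0 < Real.exp (s * ε) := Real.exp_pos _
    have h1 : (P {ω | Real.exp (s * ε) ≤ Real.exp (s * S T ω)}).toReal
        ≤ Real.exp ((T : ℝ) * (s ^ 2 * c ^ 2)) / Real.exp (s * ε) := by
      rw [le_div_iff₀ hpos, mul_comm]
      exact markov.trans hbound
    rwa [← Real.exp_sub] at h1
  calc P {ω | ε ≤ S T ω} ≤ P {ω | Real.exp (s * ε) ≤ Real.exp (s * S T ω)} := measure_mono hsub
  _ ≤ ENNReal.ofReal (Real.exp ((T : ℝ) * (s ^ 2 * c ^ 2) - s * ε)) := by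
      rw [← ENNReal.ofReal_toReal (measure_ne_top P _)]
      exact ENNReal.ofReal_le_ofReal hPB


lemma SSRB.simplex_nonneg {m : ℕ} {v : Fin m → ℝ} (hv : v ∈ stdSimplex ℝ (Fin m)) :
    ∀ i, 0 ≤ v i := hv.1

lemma SSRB.simplex_le_one {m : ℕ} {v : Fin m → ℝ} (hv : v ∈ stdSimplex ℝ (Fin m)) (i : Fin m) :
    v i ≤ 1 := by
  calc v i ≤ ∑ k, v k := Finset.single_le_sum (fun k _ => hv.1 k) (Finset.mem_univ i)
  _ = 1 := hv.2

lemma SSRB.abs_dot_le {m : ℕ} {g v : Fin m → ℝ} {B : ℝ} (hv : v ∈ stdSimplex ℝ (Fin m))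
    (hg : ∀ i, |g i| ≤ B) : |∑ i, g i * v i| ≤ B := by
  calc |∑ i, g i * v i| ≤ ∑ i, |g i * v i| := Finset.abs_sum_le_sum_abs _ _
  _ ≤ ∑ i, B * v i := by
      apply Finset.sum_le_sum
      intro i _
      rw [abs_mul, abs_of_nonneg (hv.1 i)]
      exact mul_le_mul_of_nonneg_right (hg i) (hv.1 i)
  _ = B := by rw [← Finset.mul_sum, hv.2, mul_one]

lemma SSRB.matmul_mem_simplex {m : ℕ} {M' : Fin m → Fin m → ℝ} {v : Fin m → ℝ}
    (hM' : ∀ j, (fun i => M' i j) ∈ stdSimplex ℝ (Fin m)) (hv : v ∈ stdSimplex ℝ (Fin m)) :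
    (fun i => ∑ j, M' i j * v j) ∈ stdSimplex ℝ (Fin m) := by
  constructor
  · intro i
    exact Finset.sum_nonneg (fun j _ => mul_nonneg ((hM' j).1 i) (hv.1 j))
  · calc ∑ i, ∑ j, M' i j * v j = ∑ j, ∑ i, M' i j * v j := Finset.sum_comm
    _ = ∑ j, v j := by
        apply Finset.sum_congr rfl
        intro j _
        rw [← Finset.sum_mul, (hM' j).2, one_mul]
    _ = 1 := hv.2

lemma SSRB.eq_of_sq_eq_sq {a b : ℝ} (ha : 0 ≤ a) (hb : 0 ≤ b) (h : a ^ 2 = b ^ 2) : a = b := by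
  rw [← Real.sqrt_sq ha, ← Real.sqrt_sq hb, h]

lemma SSRB.kw_ineq {K W mh L T : ℝ} (hK0 : 0 ≤ K) (hW0 : 0 ≤ W) (hL0 : 0 ≤ L)
    (hmh1 : 1 ≤ mh) (hT0 : 0 ≤ T) (hK2 : K ^ 2 = T * mh) (hW2 : W ^ 2 = T * L) :
    (K + 4 * W) ^ 2 ≤ 2 * mh * (1 + 16 * L) * T := by
  nlinarith [sq_nonneg (K - 4 * W), mul_nonneg (sub_nonneg.mpr hmh1) (mul_nonneg hT0 hL0)]

lemma SSRB.le_one_of_sq {a b : ℝ} (ha : 0 ≤ a) (h1 : a ^ 2 = b) (h2 : b ≤ 1) : a ≤ 1 := by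
  nlinarith

lemma SSRB.mh_le_T {mh L T : ℝ} (hmh0 : 0 ≤ mh) (hL0 : 0 ≤ L)
    (hTs : 2 * mh * (1 + 16 * L) < T) : mh / T ≤ 1 := by
  have hT0 : 0 < T := by nlinarith [mul_nonneg hmh0 hL0]
  rw [div_le_one hT0]
  nlinarith [mul_nonneg hmh0 hL0]

lemma SSRB.L_le_T {mh L T : ℝ} (hmh1 : 1 ≤ mh) (hL0 : 0 ≤ L)
    (hTs : 2 * mh * (1 + 16 * L) < T) : L ≤ T := by
  nlinarith [mul_nonneg (sub_nonneg.mpr hmh1) hL0]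

set_option maxHeartbeats 1000000 in
/-- **Stochastic swap-regret bound** (Lemma C.13).  Let `Λ = Δ^{m̃}` and
`f₁, …, f_T` be concave on `Λ`.  At each step the player plays a stationary
distribution `λ^(t)` of the left-stochastic matrix `M^(t)`, and updates `M`
multiplicatively using `A^(t) = ĝ^(t) (λ^(t))ᵀ` followed by column
normalization, where `ĝ^(t)` is a stochastic supergradient (adapted, bounded
by `B_ĝ` in `∞`-norm almost surely, whose conditional expectation given the
past is a supergradient of `f_t` at `λ^(t)`), with step size
`η = √(m̃ ln m̃ / (T B_ĝ²))`.  Then for every left-stochastic `M*`, with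
probability at least `1 − δ`,
`(1/T) ∑ₜ fₜ(M* λ^(t)) − (1/T) ∑ₜ fₜ(λ^(t))
  ≤ 2 B_ĝ √(2 (m̃ ln m̃)(1 + 16 ln(1/δ)) / T)`. -/
theorem stochastic_swap_regret_bound
    {mt : ℕ}
    {Ω : Type*} {m0 : MeasurableSpace Ω} (P : Measure Ω) [IsProbabilityMeasure P]
    (ℱ : Filtration ℕ m0)
    (f : ℕ → (Fin mt → ℝ) → ℝ)
    (hconc : ∀ t, ConcaveOn ℝ (stdSimplex ℝ (Fin mt)) (f t))
    (Bg δ : ℝ) (hδ : 0 < δ)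
    (T : ℕ) (hT : 0 < T)
    (η : ℝ) (hη : η = Real.sqrt ((mt : ℝ) * Real.log mt / (T * Bg ^ 2)))
    (lams : ℕ → Ω → Fin mt → ℝ)
    (gs : ℕ → Ω → Fin mt → ℝ)
    (Ms : ℕ → Ω → Fin mt → Fin mt → ℝ)
    (hinit : ∀ ω i j, Ms 0 ω i j = 1 / (mt : ℝ))
    -- adaptedness
    (hMmeas : ∀ t, Measurable[ℱ t] (Ms t))
    (hlammeas : ∀ t, Measurable[ℱ t] (lams t))
    (hgmeas : ∀ t, Measurable[ℱ (t + 1)] (gs t))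
    -- `λ^(t)` is a stationary distribution of `M^(t)`
    (hstat : ∀ t < T, ∀ ω, lams t ω ∈ stdSimplex ℝ (Fin mt) ∧
      ∀ i, ∑ j, Ms t ω i j * lams t ω j = lams t ω i)
    -- the conditional expectation of `ĝ^(t)` is a supergradient of `f_t`
    -- at `λ^(t)`
    (hsuper : ∀ t < T, ∀ᵐ ω ∂P, ∀ y ∈ stdSimplex ℝ (Fin mt),
      f t y ≤ f t (lams t ω)
        + ∑ i, (P[fun ω' => gs t ω' i|ℱ t]) ω * (y i - lams t ω i))
    -- almost-sure `∞`-norm bound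
    (hgb : ∀ t < T, ∀ᵐ ω ∂P, ∀ i, |gs t ω i| ≤ Bg)
    -- multiplicative update with `A^(t) = ĝ^(t) (λ^(t))ᵀ`, then column
    -- normalization
    (hupdate : ∀ t < T, ∀ ω i j,
      Ms (t + 1) ω i j = (Ms t ω i j * Real.exp (η * (gs t ω i * lams t ω j)))
        / ∑ k, Ms t ω k j * Real.exp (η * (gs t ω k * lams t ω j))) :
    ∀ M' : Fin mt → Fin mt → ℝ,
      (∀ j, (fun i => M' i j) ∈ stdSimplex ℝ (Fin mt)) →
      ENNReal.ofReal (1 - δ) ≤ P {ω |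
        (1 / (T : ℝ)) * ∑ t ∈ Finset.range T,
            f t (fun i => ∑ j, M' i j * lams t ω j)
          - (1 / (T : ℝ)) * ∑ t ∈ Finset.range T, f t (lams t ω)
        ≤ 2 * Bg * Real.sqrt (2 * ((mt : ℝ) * Real.log mt)
            * (1 + 16 * Real.log (1 / δ)) / T)} := by
  intro M' hM'
  have hΩ : Nonempty Ω := by
    by_contra h
    rw [not_nonempty_iff] at h
    have h1 : P Set.univ = 1 := measure_univ
    rw [Set.univ_eq_empty_iff.mpr h] at h1
    simp at h1
  obtain ⟨ω0⟩ := hΩ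
  have haeNeBot : (Filter.NeBot (ae P)) := ae_neBot.mpr (IsProbabilityMeasure.ne_zero P)
  rcases Nat.eq_zero_or_pos mt with hmt0 | hmtpos
  · exfalso
    have h2 := (hstat 0 hT ω0).1.2
    subst hmt0
    simpa using h2
  rcases le_or_gt 1 δ with hδ1 | hδ1
  · rw [ENNReal.ofReal_eq_zero.mpr (by linarith)]
    exact zero_le
  have hTpos : (0:ℝ) < (T:ℝ) := by exact_mod_cast hT
  have hBg0 : 0 ≤ Bg := by
    obtain ⟨ω, hω⟩ := (hgb 0 hT).exists
    exact (abs_nonneg _).trans (hω ⟨0, hmtpos⟩)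
  have hη0 : 0 ≤ η := hη ▸ Real.sqrt_nonneg _
  set L : ℝ := Real.log (1 / δ) with hLdef
  have hL0 : 0 ≤ L := Real.log_nonneg (by rw [le_div_iff₀ hδ]; linarith)
  set mh : ℝ := (mt : ℝ) * Real.log mt with hmhdef
  have hmh0 : 0 ≤ mh := mul_nonneg (Nat.cast_nonneg _)
    (Real.log_nonneg (by exact_mod_cast hmtpos))
  -- the case mt = 1 : both sides of the regret inequality coincide
  rcases Nat.lt_or_ge mt 2 with hmt2 | hmt2
  · have hmt1 : mt = 1 := le_antisymm (Nat.lt_succ_iff.mp hmt2) hmtpos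
    have hfeq : ∀ ω, ∀ t < T, (fun i => ∑ j, M' i j * lams t ω j) = lams t ω := by
      intro ω t ht
      funext i
      have hl := (hstat t ht ω).1.2
      have hm := (hM' i).2
      subst hmt1
      have hi0 : i = 0 := Subsingleton.elim i 0
      subst hi0
      rw [Fin.sum_univ_one] at hl hm ⊢
      rw [hm, hl, one_mul]
    refine le_trans (ENNReal.ofReal_le_one.mpr (by linarith)) ?_
    rw [← measure_univ (μ := P)]
    apply measure_mono
    intro ω _
    simp only [Set.mem_setOf_eq]
    have hsume : ∑ t ∈ Finset.range T, f t (fun i => ∑ j, M' i j * lams t ω j)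
        = ∑ t ∈ Finset.range T, f t (lams t ω) := by
      apply Finset.sum_congr rfl
      intro t ht
      rw [hfeq ω t (Finset.mem_range.mp ht)]
    rw [hsume, sub_self]
    positivity
  -- now mt ≥ 2
  have hmh1 : 1 ≤ mh := by
    have h2 : (2:ℝ) ≤ (mt:ℝ) := by exact_mod_cast hmt2
    have hlog2 : Real.log 2 ≤ Real.log mt := Real.log_le_log (by norm_num) h2
    have hl2 := Real.log_two_gt_d9
    have hmul : (2:ℝ) * Real.log 2 ≤ (mt:ℝ) * Real.log mt :=
      mul_le_mul h2 hlog2 (by linarith) (by linarith)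
    rw [hmhdef]
    nlinarith
  -- regret decomposition random variables
  set X : ℕ → Ω → ℝ := fun t ω => ∑ i, (P[fun ω' => gs t ω' i|ℱ t]) ω
    * ((∑ j, M' i j * lams t ω j) - lams t ω i) with hXdef
  set Y : ℕ → Ω → ℝ := fun t ω => (∑ i, gs t ω i * (∑ j, M' i j * lams t ω j))
    - ∑ i, gs t ω i * lams t ω i with hYdef
  set Z : ℕ → Ω → ℝ := fun t ω => X t ω - Y t ω with hZdef
  have hlamS : ∀ t < T, ∀ ω, lams t ω ∈ stdSimplex ℝ (Fin mt) := fun t ht ω => (hstat t ht ω).1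
  have hMlamS : ∀ t < T, ∀ ω, (fun i => ∑ j, M' i j * lams t ω j) ∈ stdSimplex ℝ (Fin mt) :=
    fun t ht ω => SSRB.matmul_mem_simplex hM' (hlamS t ht ω)
  have hc1 : ∀ t < T, ∀ ω i, |(∑ j, M' i j * lams t ω j) - lams t ω i| ≤ 1 := by
    intro t ht ω i
    rw [abs_le]
    constructor
    · have h1 := (hMlamS t ht ω).1 i
      have h2 := SSRB.simplex_le_one (hlamS t ht ω) i
      simp only at h1
      linarith
    · have h1 := SSRB.simplex_le_one (hMlamS t ht ω) i
      have h2 := (hlamS t ht ω).1 i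
      linarith
  -- measurability of components
  have hgmi : ∀ t i, Measurable[ℱ (t+1)] (fun ω => gs t ω i) :=
    fun t i => (measurable_pi_apply i).comp (hgmeas t)
  have hgmi0 : ∀ t i, Measurable (fun ω => gs t ω i) :=
    fun t i => (hgmi t i).mono (ℱ.le _) le_rfl
  have hlmi : ∀ t i, Measurable[ℱ t] (fun ω => lams t ω i) :=
    fun t i => (measurable_pi_apply i).comp (hlammeas t)
  have hcm : ∀ t i, Measurable[ℱ t] (fun ω => (∑ j, M' i j * lams t ω j) - lams t ω i) := by
    intro t i
    exact (Finset.measurable_sum Finset.univ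
      (fun j _ => (hlmi t j).const_mul (M' i j))).sub (hlmi t i)
  have hgbi : ∀ t < T, ∀ i, ∀ᵐ ω ∂P, |gs t ω i| ≤ Bg :=
    fun t ht i => (hgb t ht).mono (fun ω h => h i)
  have hgint : ∀ t < T, ∀ i, Integrable (fun ω => gs t ω i) P := fun t ht i =>
    SSRB.integrable_of_bound P (hgmi0 t i).aestronglyMeasurable Bg (hgbi t ht i)
  -- conditional expectations are bounded by Bg
  have hcebd : ∀ t < T, ∀ᵐ ω ∂P, ∀ i, |(P[fun ω' => gs t ω' i|ℱ t]) ω| ≤ Bg := by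
    intro t ht
    rw [ae_all_iff]
    intro i
    have hub : (fun ω => gs t ω i) ≤ᵐ[P] fun _ => Bg :=
      (hgbi t ht i).mono (fun ω h => (abs_le.mp h).2)
    have hlb : (fun _ => -Bg) ≤ᵐ[P] (fun ω => gs t ω i) :=
      (hgbi t ht i).mono (fun ω h => (abs_le.mp h).1)
    have h1 : P[(fun ω => gs t ω i)|ℱ t] ≤ᵐ[P] P[(fun _ => Bg : Ω → ℝ)|ℱ t] :=
      condExp_mono (hgint t ht i) (integrable_const Bg) hub
    have h2 : P[(fun _ => (-Bg) : Ω → ℝ)|ℱ t] ≤ᵐ[P] P[(fun ω => gs t ω i)|ℱ t] :=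
      condExp_mono (integrable_const (-Bg)) (hgint t ht i) hlb
    have e1 : P[(fun _ => Bg : Ω → ℝ)|ℱ t] = fun _ => Bg := condExp_const (ℱ.le t) Bg
    have e2 : P[(fun _ => (-Bg) : Ω → ℝ)|ℱ t] = fun _ => -Bg := condExp_const (ℱ.le t) (-Bg)
    rw [e1] at h1
    rw [e2] at h2
    filter_upwards [h1, h2] with ω hω1 hω2
    exact abs_le.mpr ⟨hω2, hω1⟩
  -- a.e. bounds on X and Y
  have hXbd : ∀ t < T, ∀ᵐ ω ∂P, |X t ω| ≤ 2 * Bg := by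
    intro t ht
    filter_upwards [hcebd t ht] with ω hω
    have e : X t ω = (∑ i, (P[fun ω' => gs t ω' i|ℱ t]) ω * (∑ j, M' i j * lams t ω j))
        - ∑ i, (P[fun ω' => gs t ω' i|ℱ t]) ω * lams t ω i := by
      rw [hXdef, ← Finset.sum_sub_distrib]
      apply Finset.sum_congr rfl
      intro i _; ring
    rw [e]
    have h1 := SSRB.abs_dot_le (hMlamS t ht ω) hω
    have h2 := SSRB.abs_dot_le (hlamS t ht ω) hω
    calc |_ - _| ≤ |∑ i, (P[fun ω' => gs t ω' i|ℱ t]) ω * (∑ j, M' i j * lams t ω j)|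
        + |∑ i, (P[fun ω' => gs t ω' i|ℱ t]) ω * lams t ω i| := abs_sub _ _
    _ ≤ 2 * Bg := by
        have h1' : |∑ i, (P[fun ω' => gs t ω' i|ℱ t]) ω * (∑ j, M' i j * lams t ω j)| ≤ Bg := h1
        linarith
  have hYbd : ∀ t < T, ∀ᵐ ω ∂P, |Y t ω| ≤ 2 * Bg := by
    intro t ht
    filter_upwards [hgb t ht] with ω hω
    have h1 := SSRB.abs_dot_le (hMlamS t ht ω) hω
    have h2 := SSRB.abs_dot_le (hlamS t ht ω) hω
    rw [hYdef]
    calc |_ - _| ≤ |∑ i, gs t ω i * (∑ j, M' i j * lams t ω j)|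
        + |∑ i, gs t ω i * lams t ω i| := abs_sub _ _
    _ ≤ 2 * Bg := by
        have h1' : |∑ i, gs t ω i * (∑ j, M' i j * lams t ω j)| ≤ Bg := h1
        linarith
  -- a.e. supergradient bound via X
  have haeSuper : ∀ᵐ ω ∂P, ∀ t, t < T →
      f t (fun i => ∑ j, M' i j * lams t ω j) ≤ f t (lams t ω) + X t ω := by
    rw [ae_all_iff]
    intro t
    by_cases ht : t < T
    · filter_upwards [hsuper t ht] with ω hω _
      have h := hω (fun i => ∑ j, M' i j * lams t ω j) (hMlamS t ht ω)
      simpa [hXdef] using h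
    · filter_upwards with ω h'
      exact absurd h' ht
  have haeXbd : ∀ᵐ ω ∂P, ∀ t, t < T → |X t ω| ≤ 2 * Bg := by
    rw [ae_all_iff]
    intro t
    by_cases ht : t < T
    · filter_upwards [hXbd t ht] with ω hω _; exact hω
    · filter_upwards with ω h'; exact absurd h' ht
  -- case split on triviality
  rcases le_or_gt (T:ℝ) (2 * mh * (1 + 16 * L)) with hTs | hTs
  · -- trivial case: the bound exceeds 2*Bg, which holds a.s.
    have hRge : 2 * Bg ≤ 2 * Bg * Real.sqrt (2 * mh * (1 + 16 * L) / T) := by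
      have harg : (1:ℝ) ≤ 2 * mh * (1 + 16 * L) / T := by
        rw [le_div_iff₀ hTpos]
        linarith
      have hs1 : (1:ℝ) ≤ Real.sqrt (2 * mh * (1 + 16 * L) / T) := by
        have := Real.sqrt_le_sqrt harg
        rwa [Real.sqrt_one] at this
      nlinarith
    refine le_trans (ENNReal.ofReal_le_one.mpr (by linarith)) ?_
    rw [← measure_univ (μ := P)]
    apply measure_mono_ae
    filter_upwards [haeSuper, haeXbd] with ω h1 h2
    intro _
    show _ ≤ _
    have hsum : ∑ t ∈ Finset.range T, f t (fun i => ∑ j, M' i j * lams t ω j)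
        ≤ (∑ t ∈ Finset.range T, f t (lams t ω)) + ∑ t ∈ Finset.range T, X t ω := by
      rw [← Finset.sum_add_distrib]
      exact Finset.sum_le_sum (fun t ht' => h1 t (Finset.mem_range.mp ht'))
    have hXsum : ∑ t ∈ Finset.range T, X t ω ≤ 2 * Bg * T := by
      calc ∑ t ∈ Finset.range T, X t ω ≤ ∑ _t ∈ Finset.range T, (2 * Bg) :=
        Finset.sum_le_sum (fun t ht' => (abs_le.mp (h2 t (Finset.mem_range.mp ht'))).2)
      _ = 2 * Bg * T := by rw [Finset.sum_const, Finset.card_range, nsmul_eq_mul]; ring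
    have key : (1 / (T : ℝ)) * ∑ t ∈ Finset.range T, f t (fun i => ∑ j, M' i j * lams t ω j)
        - (1 / (T : ℝ)) * ∑ t ∈ Finset.range T, f t (lams t ω) ≤ 2 * Bg := by
      rw [← mul_sub]
      calc (1 / (T : ℝ)) * (∑ t ∈ Finset.range T, f t (fun i => ∑ j, M' i j * lams t ω j)
            - ∑ t ∈ Finset.range T, f t (lams t ω))
          ≤ (1 / (T : ℝ)) * (2 * Bg * T) := by
            apply mul_le_mul_of_nonneg_left _ (by positivity)
            linarith
      _ = 2 * Bg := by field_simp
    linarith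
  -- main case
  rcases eq_or_lt_of_le hBg0 with hBgeq | hBgpos
  · -- Bg = 0
    refine le_trans (ENNReal.ofReal_le_one.mpr (by linarith)) ?_
    rw [← measure_univ (μ := P)]
    apply measure_mono_ae
    filter_upwards [haeSuper, haeXbd] with ω h1 h2
    intro _
    show _ ≤ _
    have hsum : ∑ t ∈ Finset.range T, f t (fun i => ∑ j, M' i j * lams t ω j)
        ≤ (∑ t ∈ Finset.range T, f t (lams t ω)) + ∑ t ∈ Finset.range T, X t ω := by
      rw [← Finset.sum_add_distrib]
      exact Finset.sum_le_sum (fun t ht' => h1 t (Finset.mem_range.mp ht'))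
    have hXsum : ∑ t ∈ Finset.range T, X t ω ≤ 2 * Bg * T := by
      calc ∑ t ∈ Finset.range T, X t ω ≤ ∑ _t ∈ Finset.range T, (2 * Bg) :=
        Finset.sum_le_sum (fun t ht' => (abs_le.mp (h2 t (Finset.mem_range.mp ht'))).2)
      _ = 2 * Bg * T := by rw [Finset.sum_const, Finset.card_range, nsmul_eq_mul]; ring
    have key : (1 / (T : ℝ)) * ∑ t ∈ Finset.range T, f t (fun i => ∑ j, M' i j * lams t ω j)
        - (1 / (T : ℝ)) * ∑ t ∈ Finset.range T, f t (lams t ω) ≤ 2 * Bg := by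
      rw [← mul_sub]
      calc (1 / (T : ℝ)) * (∑ t ∈ Finset.range T, f t (fun i => ∑ j, M' i j * lams t ω j)
            - ∑ t ∈ Finset.range T, f t (lams t ω))
          ≤ (1 / (T : ℝ)) * (2 * Bg * T) := by
            apply mul_le_mul_of_nonneg_left _ (by positivity)
            linarith
      _ = 2 * Bg := by field_simp
    have hRge : 2 * Bg ≤ 2 * Bg * Real.sqrt (2 * mh * (1 + 16 * L) / T) := by
      rw [← hBgeq]
      norm_num
    linarith
  -- Bg > 0 and T large
  have hBgne : Bg ≠ 0 := ne_of_gt hBgpos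
  have hTne : (T:ℝ) ≠ 0 := ne_of_gt hTpos
  have hη2sq : η ^ 2 = mh / (T * Bg ^ 2) := by
    rw [hη]
    exact Real.sq_sqrt (by positivity)
  have hηpos : 0 < η := by
    rw [hη]
    apply Real.sqrt_pos.mpr
    have : (0:ℝ) < mh := by linarith
    positivity
  have hηBg : η * Bg ≤ 1 := by
    have h1 : (η * Bg) ^ 2 = mh / T := by
      rw [mul_pow, hη2sq]
      field_simp
    have h2 : mh / (T:ℝ) ≤ 1 := SSRB.mh_le_T hmh0 hL0 hTs
    exact SSRB.le_one_of_sq (mul_nonneg hη0 hBg0) h1 h2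
  have haegb : ∀ᵐ ω ∂P, ∀ t, t < T → ∀ i, |gs t ω i| ≤ Bg := by
    rw [ae_all_iff]
    intro t
    by_cases ht : t < T
    · filter_upwards [hgb t ht] with ω hω _; exact hω
    · filter_upwards with ω h'; exact absurd h' ht
  have haeMW : ∀ᵐ ω ∂P, ∑ t ∈ Finset.range T,
      (η * Y t ω) ≤ mh + η ^ 2 * Bg ^ 2 * T := by
    filter_upwards [haegb] with ω hω
    exact SSRB.mw_bound hmtpos Bg η hBg0 hη0 hηBg (fun t => gs t ω) (fun t => lams t ω)
      (fun t => Ms t ω) M' hM' (hinit ω) (fun t ht => hstat t ht ω)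
      (fun t ht => hω t ht) (fun t ht => hupdate t ht ω)
  -- Azuma parameters
  set W : ℝ := Real.sqrt ((T:ℝ) * L) with hWdef
  have hW0 : 0 ≤ W := Real.sqrt_nonneg _
  have hW2 : W ^ 2 = (T:ℝ) * L := Real.sq_sqrt (by positivity)
  set K : ℝ := Real.sqrt ((T:ℝ) * mh) with hKdef
  have hK0 : 0 ≤ K := Real.sqrt_nonneg _
  have hK2 : K ^ 2 = (T:ℝ) * mh := Real.sq_sqrt (by positivity)
  have hη2T : η ^ 2 * Bg ^ 2 * (T:ℝ) = mh := by
    rw [hη2sq]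
    field_simp
  have hηBgK : η * (Bg * K) = mh := by
    apply SSRB.eq_of_sq_eq_sq (by positivity) hmh0
    rw [mul_pow, mul_pow, hη2sq, hK2]
    field_simp
  have hWleT : W ≤ (T:ℝ) := by
    have hLT : L ≤ (T:ℝ) := SSRB.L_le_T hmh1 hL0 hTs
    have h1 : W ≤ Real.sqrt ((T:ℝ) * T) := by
      rw [hWdef]
      apply Real.sqrt_le_sqrt
      exact mul_le_mul_of_nonneg_left hLT hTpos.le
    rwa [Real.sqrt_mul_self hTpos.le] at h1
  set sp : ℝ := W / (4 * (T:ℝ) * Bg) with hspdef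
  have hsp0 : 0 ≤ sp := by positivity
  have hspc : sp * (4 * Bg) ≤ 1 := by
    rw [hspdef, div_mul_eq_mul_div, div_le_one (by positivity)]
    have h1 := mul_le_mul_of_nonneg_right hWleT (show (0:ℝ) ≤ 4 * Bg by positivity)
    nlinarith only [h1]
  -- measurability of X, Y, Z
  have hXm : ∀ t, Measurable[ℱ t] (X t) := by
    intro t
    show Measurable[ℱ t] fun ω => ∑ i, (P[fun ω' => gs t ω' i|ℱ t]) ω
      * ((∑ j, M' i j * lams t ω j) - lams t ω i)
    apply Finset.measurable_sum
    intro i _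
    exact (stronglyMeasurable_condExp.measurable).mul (hcm t i)
  have hYm : ∀ t, Measurable[ℱ (t+1)] (Y t) := by
    intro t
    have h1 : Measurable[ℱ (t+1)] (fun ω => ∑ i, gs t ω i * (∑ j, M' i j * lams t ω j)) := by
      apply Finset.measurable_sum
      intro i _
      exact (hgmi t i).mul (Finset.measurable_sum Finset.univ
        (fun j _ => ((hlmi t j).mono (ℱ.mono (Nat.le_succ t)) le_rfl).const_mul (M' i j)))
    have h2 : Measurable[ℱ (t+1)] (fun ω => ∑ i, gs t ω i * lams t ω i) := by
      apply Finset.measurable_sum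
      intro i _
      exact (hgmi t i).mul ((hlmi t i).mono (ℱ.mono (Nat.le_succ t)) le_rfl)
    exact h1.sub h2
  have hZm : ∀ t, Measurable[ℱ (t+1)] (Z t) := fun t =>
    ((hXm t).mono (ℱ.mono (Nat.le_succ t)) le_rfl).sub (hYm t)
  have hXint : ∀ t < T, Integrable (X t) P := fun t ht =>
    SSRB.integrable_of_bound P ((hXm t).mono (ℱ.le t) le_rfl).aestronglyMeasurable _ (hXbd t ht)
  have hYint : ∀ t < T, Integrable (Y t) P := fun t ht =>
    SSRB.integrable_of_bound P ((hYm t).mono (ℱ.le (t+1)) le_rfl).aestronglyMeasurable _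
      (hYbd t ht)
  have hZbddT : ∀ t < T, ∀ᵐ ω ∂P, |Z t ω| ≤ 4 * Bg := by
    intro t ht
    filter_upwards [hXbd t ht, hYbd t ht] with ω h1 h2
    calc |Z t ω| ≤ |X t ω| + |Y t ω| := abs_sub _ _
    _ ≤ 4 * Bg := by linarith
  have hZcondT : ∀ t < T, P[Z t|ℱ t] =ᵐ[P] 0 := by
    intro t ht
    have hXfix : P[X t|ℱ t] = X t :=
      condExp_of_stronglyMeasurable (ℱ.le t) ((hXm t).stronglyMeasurable) (hXint t ht)
    have hYce : P[Y t|ℱ t] =ᵐ[P] X t := by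
      have hYeq : Y t = ∑ i, (fun ω => ((∑ j, M' i j * lams t ω j) - lams t ω i) * gs t ω i) := by
        funext ω
        rw [Finset.sum_apply]
        show (∑ i, gs t ω i * (∑ j, M' i j * lams t ω j)) - ∑ i, gs t ω i * lams t ω i = _
        rw [← Finset.sum_sub_distrib]
        apply Finset.sum_congr rfl
        intro i _
        ring
      have hint : ∀ i : Fin mt, Integrable
          (fun ω => ((∑ j, M' i j * lams t ω j) - lams t ω i) * gs t ω i) P := by
        intro i
        apply SSRB.integrable_of_bound P
          (((hcm t i).mono (ℱ.le t) le_rfl).mul (hgmi0 t i)).aestronglyMeasurable (1 * Bg)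
        filter_upwards [hgbi t ht i] with ω hω
        rw [Pi.mul_apply, abs_mul]
        exact mul_le_mul (hc1 t ht ω i) hω (abs_nonneg _) zero_le_one
      rw [hYeq]
      have h1 := condExp_finset_sum (μ := P) (m := ℱ t)
        (f := fun i ω => ((∑ j, M' i j * lams t ω j) - lams t ω i) * gs t ω i)
        (s := Finset.univ) (fun i _ => hint i)
      have h2 : ∀ i : Fin mt,
          P[(fun ω => ((∑ j, M' i j * lams t ω j) - lams t ω i) * gs t ω i)|ℱ t]
          =ᵐ[P] (fun ω => ((∑ j, M' i j * lams t ω j) - lams t ω i))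
            * P[(fun ω => gs t ω i)|ℱ t] := by
        intro i
        exact condExp_stronglyMeasurable_mul_of_bound (ℱ.le t) ((hcm t i).stronglyMeasurable)
          (hgint t ht i) 1
          (ae_of_all _ (fun ω => by rw [Real.norm_eq_abs]; exact hc1 t ht ω i))
      have h3 : ∀ᵐ ω ∂P, ∀ i : Fin mt,
          (P[(fun ω' => ((∑ j, M' i j * lams t ω' j) - lams t ω' i) * gs t ω' i)|ℱ t]) ω
          = ((∑ j, M' i j * lams t ω j) - lams t ω i) * (P[(fun ω' => gs t ω' i)|ℱ t]) ω := by
        rw [ae_all_iff]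
        intro i
        filter_upwards [h2 i] with ω hω
        exact hω
      filter_upwards [h1, h3] with ω hω1 hω3
      rw [hω1, Finset.sum_apply]
      show _ = X t ω
      rw [hXdef]
      apply Finset.sum_congr rfl
      intro i _
      rw [hω3 i]
      ring
    have hsubce : P[Z t|ℱ t] =ᵐ[P] P[X t|ℱ t] - P[Y t|ℱ t] := by
      have hZXY : Z t = X t - Y t := rfl
      rw [hZXY]
      exact condExp_sub (hXint t ht) (hYint t ht) (ℱ t)
    filter_upwards [hsubce, hYce] with ω h1 h2
    rw [h1, Pi.sub_apply, hXfix, h2, sub_self, Pi.zero_apply]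
  -- apply Azuma
  have hAz := SSRB.azuma P ℱ Z T (4 * Bg) sp (8 * Bg * W) (by positivity) hsp0 hspc
    (by positivity) (fun t _ => hZm t) hZbddT hZcondT
  have hexp : (T:ℝ) * (sp ^ 2 * (4 * Bg) ^ 2) - sp * (8 * Bg * W) = -L := by
    have e1 : sp ^ 2 * (4 * Bg) ^ 2 = L / T := by
      rw [hspdef, div_pow, hW2]
      field_simp
    have e2 : sp * (8 * Bg * W) = 2 * L := by
      rw [hspdef]
      have e3 : W / (4 * (T:ℝ) * Bg) * (8 * Bg * W) = W ^ 2 * (2 / T) := by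
        field_simp
        ring
      rw [e3, hW2]
      field_simp
    rw [e1, e2]
    field_simp
    ring
  have hδexp : Real.exp (-L) = δ := by
    rw [hLdef, one_div, Real.log_inv, neg_neg, Real.exp_log hδ]
  rw [hexp, hδexp] at hAz
  -- convert to the probability bound
  have hSmeas : Measurable fun ω => ∑ t ∈ Finset.range T, Z t ω :=
    Finset.measurable_sum _ (fun t _ => (hZm t).mono (ℱ.le _) le_rfl)
  have hmeasEvent : MeasurableSet {ω | 8 * Bg * W ≤ ∑ t ∈ Finset.range T, Z t ω} :=
    measurableSet_le measurable_const hSmeas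
  have hcompl : {ω | ∑ t ∈ Finset.range T, Z t ω < 8 * Bg * W}
      = {ω | 8 * Bg * W ≤ ∑ t ∈ Finset.range T, Z t ω}ᶜ := by
    ext ω
    simp [not_le]
  have h1δ : ENNReal.ofReal (1 - δ) = 1 - ENNReal.ofReal δ := by
    have hsum : ENNReal.ofReal (1 - δ) + ENNReal.ofReal δ = 1 := by
      rw [← ENNReal.ofReal_add (by linarith) hδ.le]
      norm_num
    rw [← hsum, ENNReal.add_sub_cancel_right ENNReal.ofReal_ne_top]
  calc ENNReal.ofReal (1 - δ) = 1 - ENNReal.ofReal δ := h1δ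
  _ ≤ 1 - P {ω | 8 * Bg * W ≤ ∑ t ∈ Finset.range T, Z t ω} := tsub_le_tsub_left hAz 1
  _ = P {ω | ∑ t ∈ Finset.range T, Z t ω < 8 * Bg * W} := by
      rw [hcompl, prob_compl_eq_one_sub hmeasEvent]
  _ ≤ P {ω | (1 / (T : ℝ)) * ∑ t ∈ Finset.range T,
            f t (fun i => ∑ j, M' i j * lams t ω j)
          - (1 / (T : ℝ)) * ∑ t ∈ Finset.range T, f t (lams t ω)
        ≤ 2 * Bg * Real.sqrt (2 * mh * (1 + 16 * L) / T)} := by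
      apply measure_mono_ae
      filter_upwards [haeSuper, haeMW] with ω h1 h2
      intro hlt
      have hlt' : ∑ t ∈ Finset.range T, Z t ω < 8 * Bg * W := hlt
      show _ ≤ _
      have hsumf : ∑ t ∈ Finset.range T, f t (fun i => ∑ j, M' i j * lams t ω j)
          ≤ (∑ t ∈ Finset.range T, f t (lams t ω)) + ∑ t ∈ Finset.range T, X t ω := by
        rw [← Finset.sum_add_distrib]
        exact Finset.sum_le_sum (fun t ht' => h1 t (Finset.mem_range.mp ht'))
      have hXYZ : ∑ t ∈ Finset.range T, X t ω
          = (∑ t ∈ Finset.range T, Y t ω) + ∑ t ∈ Finset.range T, Z t ω := by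
        rw [← Finset.sum_add_distrib]
        apply Finset.sum_congr rfl
        intro t _
        show X t ω = Y t ω + (X t ω - Y t ω)
        ring
      have hYsum : ∑ t ∈ Finset.range T, Y t ω ≤ 2 * (Bg * K) := by
        have h2' : η * ∑ t ∈ Finset.range T, Y t ω ≤ mh + η ^ 2 * Bg ^ 2 * T := by
          rw [Finset.mul_sum]
          exact h2
        have h2'' : η * ∑ t ∈ Finset.range T, Y t ω ≤ η * (2 * (Bg * K)) := by
          rw [hη2T] at h2'
          calc η * ∑ t ∈ Finset.range T, Y t ω ≤ mh + mh := h2'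
          _ = 2 * (η * (Bg * K)) := by rw [hηBgK]; ring
          _ = η * (2 * (Bg * K)) := by ring
        exact le_of_mul_le_mul_left h2'' hηpos
      have hKW : K + 4 * W ≤ Real.sqrt (2 * mh * (1 + 16 * L) * T) := by
        have hsq : (K + 4 * W) ^ 2 ≤ 2 * mh * (1 + 16 * L) * T :=
          SSRB.kw_ineq hK0 hW0 hL0 hmh1 hTpos.le hK2 hW2
        calc K + 4 * W = Real.sqrt ((K + 4 * W) ^ 2) := (Real.sqrt_sq (by positivity)).symm
        _ ≤ _ := Real.sqrt_le_sqrt hsq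
      have hQ : Real.sqrt (2 * mh * (1 + 16 * L) * T)
          = Real.sqrt (2 * mh * (1 + 16 * L) / T) * T := by
        apply SSRB.eq_of_sq_eq_sq (Real.sqrt_nonneg _) (by positivity)
        rw [mul_pow, Real.sq_sqrt (by positivity), Real.sq_sqrt (by positivity)]
        field_simp
      have hfinal : (∑ t ∈ Finset.range T, f t (fun i => ∑ j, M' i j * lams t ω j))
          - ∑ t ∈ Finset.range T, f t (lams t ω)
          ≤ (T:ℝ) * (2 * Bg * Real.sqrt (2 * mh * (1 + 16 * L) / T)) := by
        calc (∑ t ∈ Finset.range T, f t (fun i => ∑ j, M' i j * lams t ω j))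
            - ∑ t ∈ Finset.range T, f t (lams t ω)
            ≤ ∑ t ∈ Finset.range T, X t ω := by linarith only [hsumf]
        _ = (∑ t ∈ Finset.range T, Y t ω) + ∑ t ∈ Finset.range T, Z t ω := hXYZ
        _ ≤ 2 * (Bg * K) + 8 * Bg * W := by linarith only [hYsum, hlt']
        _ = 2 * Bg * (K + 4 * W) := by ring
        _ ≤ 2 * Bg * Real.sqrt (2 * mh * (1 + 16 * L) * T) :=
            mul_le_mul_of_nonneg_left hKW (by positivity)
        _ = (T:ℝ) * (2 * Bg * Real.sqrt (2 * mh * (1 + 16 * L) / T)) := by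
            rw [hQ]
            ring
      calc (1 / (T : ℝ)) * ∑ t ∈ Finset.range T, f t (fun i => ∑ j, M' i j * lams t ω j)
          - (1 / (T : ℝ)) * ∑ t ∈ Finset.range T, f t (lams t ω)
          = ((∑ t ∈ Finset.range T, f t (fun i => ∑ j, M' i j * lams t ω j))
            - ∑ t ∈ Finset.range T, f t (lams t ω)) / T := by ring
      _ ≤ ((T:ℝ) * (2 * Bg * Real.sqrt (2 * mh * (1 + 16 * L) / T))) / T :=
          (div_le_div_iff_of_pos_right hTpos).mpr hfinal
      _ = 2 * Bg * Real.sqrt (2 * mh * (1 + 16 * L) / T) := by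
          field_simp
end
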